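/- arXiv:1312.2172 — 2 statements merged into one kernel-verified Lean document; each statement's English description precedes it below -/
import Mathlib

section
/- (Product form of a Whittaker–Watson addition formula.) Let q be a complex number with 0 < |q| < 1 and let θ(z;q) = (z, q/z; q)_∞ for z ≠ 0. Then for all nonzero complex numbers w, x, y, z: θ(w²q;q) θ(x²q;q) θ(y²q;q) θ(z²q;q) + θ(−w²q;q) θ(−x²q;q) θ(−y²q;q) θ(−z²q;q) = θ(q x y z / w; q) θ(q w y z / x; q) θ(q w x z / y; q) θ(q w x y / z; q) + θ(−q x y z / w; q) θ(−q w y z / x; q) θ(−q w x z / y; q) θ(−q w x y / z; q). -/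
/-- The q-Pochhammer symbol of infinite order: `(x; Q)_∞ = ∏_{k=0}^∞ (1 - x Q^k)`. -/
noncomputable def qPoch (x Q : ℂ) : ℂ := ∏' k : ℕ, (1 - x * Q ^ k)

/-- The theta function `θ(z; Q) = (z, Q/z; Q)_∞`. -/
noncomputable def theta (z Q : ℂ) : ℂ := qPoch z Q * qPoch (Q / z) Q

open Finset Filter Topology

namespace WW

variable {q : ℂ}


/-- finite q-factorial-type product `E q n = ∏_{k=1}^n (1 - q^k)` -/
noncomputable def E (q : ℂ) (n : ℕ) : ℂ := ∏ k ∈ Finset.range n, (1 - q ^ (k + 1))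

/-- Gaussian binomial (with zero-extension in the lower index). -/
noncomputable def qb (q : ℂ) (m : ℕ) (k : ℤ) : ℂ :=
  if 0 ≤ k ∧ k ≤ m then E q m / (E q k.toNat * E q (m - k.toNat)) else 0

/-- triangular exponent -/
def T (n : ℤ) : ℤ := n * (n - 1) / 2

lemma two_T (n : ℤ) : 2 * T n = n * (n - 1) := by
  have he : Even (n * (n - 1)) := by
    have := Int.even_mul_succ_self (n - 1)
    simpa [mul_comm] using this
  obtain ⟨c, hc⟩ := he
  unfold T
  omega

lemma T_succ (n : ℤ) : T (n + 1) = T n + n := by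
  have h1 := two_T n
  have h2 := two_T (n + 1)
  nlinarith [h1, h2]

lemma T_zero : T 0 = 0 := rfl

variable {q : ℂ}

lemma factor_ne (hq : ‖q‖ < 1) {k : ℕ} (hk : 1 ≤ k) : (1 : ℂ) - q ^ k ≠ 0 := by
  intro h
  have h1 : (1 : ℂ) = q ^ k := by linear_combination h
  have : ‖q ^ k‖ < 1 := by
    rw [norm_pow]
    calc ‖q‖ ^ k ≤ ‖q‖ ^ 1 := pow_le_pow_of_le_one (norm_nonneg q) hq.le hk
    _ < 1 := by simpa using hq
  rw [← h1] at this
  simp at this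

lemma E_ne_zero (hq : ‖q‖ < 1) (n : ℕ) : E q n ≠ 0 := by
  exact Finset.prod_ne_zero_iff.2 fun k _ => factor_ne hq (Nat.succ_le_succ (Nat.zero_le k))


lemma E_zero : E q 0 = 1 := by simp [E]

lemma E_succ (n : ℕ) : E q (n + 1) = E q n * (1 - q ^ (n + 1)) := Finset.prod_range_succ _ _

lemma qb_eq_zero_of_lt {m : ℕ} {k : ℤ} (h : k < 0 ∨ (m : ℤ) < k) : qb q m k = 0 := by
  unfold qb; rw [if_neg (by omega)]

lemma qb_left (hq : ‖q‖ < 1) (m : ℕ) : qb q m 0 = 1 := by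
  unfold qb
  rw [if_pos (by omega)]
  simp [E_zero, div_self (E_ne_zero hq m)]

lemma qb_right (hq : ‖q‖ < 1) (m : ℕ) : qb q m m = 1 := by
  unfold qb
  rw [if_pos (by omega)]
  simp [E_zero, div_self (E_ne_zero hq m)]

lemma qb_nat (m j : ℕ) (h : j ≤ m) :
    qb q m j = E q m / (E q j * E q (m - j)) := by
  unfold qb
  rw [if_pos (by omega)]
  simp

lemma pascalA (hq : ‖q‖ < 1) (m : ℕ) (k : ℤ) :
    qb q (m + 1) k = qb q m k + q ^ ((m : ℤ) + 1 - k) * qb q m (k - 1) := by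
  rcases lt_or_ge k 0 with hk | hk
  · rw [qb_eq_zero_of_lt (Or.inl hk), qb_eq_zero_of_lt (Or.inl hk),
      qb_eq_zero_of_lt (Or.inl (by omega))]; ring
  rcases lt_or_ge ((m : ℤ) + 1) k with hk2 | hk2
  · rw [qb_eq_zero_of_lt (Or.inr hk2), qb_eq_zero_of_lt (Or.inr (by omega)),
      qb_eq_zero_of_lt (Or.inr (by omega))]; ring
  lift k to ℕ using hk with j hj
  rcases Nat.eq_zero_or_pos j with rfl | hj1
  · simp only [Nat.cast_zero]
    rw [show (0:ℤ) - 1 = -1 by ring,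
      qb_eq_zero_of_lt (m := m) (k := (-1 : ℤ)) (Or.inl (by omega)), qb_left hq, qb_left hq]
    simp
  -- interior or j = m+1
  have hjm : j ≤ m + 1 := by exact_mod_cast hk2
  rcases Nat.eq_or_lt_of_le hjm with rfl | hjm'
  · -- j = m + 1
    rw [show ((m + 1 : ℕ) : ℤ) = (m : ℤ) + 1 by push_cast; ring]
    rw [show qb q (m+1) ((m:ℤ)+1) = 1 by
      rw [show ((m:ℤ)+1) = ((m+1 : ℕ) : ℤ) by push_cast; ring]; exact qb_right hq (m+1)]
    rw [qb_eq_zero_of_lt (m := m) (k := (m:ℤ)+1) (Or.inr (by omega))]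
    rw [show (m : ℤ) + 1 - 1 = (m : ℕ) by push_cast; ring, qb_right hq]
    rw [show (m : ℤ) + 1 - ((m : ℤ) + 1) = 0 by ring]
    simp
  -- interior : 1 ≤ j ≤ m
  have hjm2 : j ≤ m := by omega
  have e1 : qb q (m+1) j = E q (m+1) / (E q j * E q (m + 1 - j)) := qb_nat _ _ (by omega)
  have e2 : qb q m j = E q m / (E q j * E q (m - j)) := qb_nat _ _ hjm2
  have e3 : qb q m ((j:ℤ) - 1) = E q m / (E q (j-1) * E q (m - (j-1))) := by
    rw [show (j : ℤ) - 1 = ((j - 1 : ℕ) : ℤ) by omega]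
    exact qb_nat _ _ (by omega)
  rw [e1, e2, e3]
  have e4 : q ^ ((m : ℤ) + 1 - j) = q ^ (m + 1 - j) := by
    rw [show (m : ℤ) + 1 - j = ((m + 1 - j : ℕ) : ℤ) by omega, zpow_natCast]
  rw [e4]
  have hE1 : E q (m+1) = E q m * (1 - q ^ (m+1)) := E_succ m
  have hE2 : E q (m + 1 - j) = E q (m - j) * (1 - q ^ (m - j + 1)) := by
    rw [show m + 1 - j = (m - j) + 1 by omega]; exact E_succ _
  have hE3 : E q j = E q (j - 1) * (1 - q ^ j) := by
    conv_lhs => rw [show j = (j - 1) + 1 by omega, E_succ, show j - 1 + 1 = j by omega]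
  have hE4 : E q (m - (j - 1)) = E q (m - j) * (1 - q ^ (m - j + 1)) := by
    rw [show m - (j - 1) = (m - j) + 1 by omega]; rw [E_succ]
  have hqm : q ^ (m + 1) = q ^ j * q ^ (m + 1 - j) := by
    rw [← pow_add, show j + (m + 1 - j) = m + 1 by omega]
  have hq5 : q ^ (m + 1 - j) = q ^ (m - j + 1) := by rw [show m + 1 - j = m - j + 1 by omega]
  rw [hE1, hE2, hE3, hE4, hqm, hq5]
  have n1 := E_ne_zero hq m
  have n2 := E_ne_zero hq (j - 1)
  have n3 := E_ne_zero hq (m - j)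
  have n4 : (1 : ℂ) - q ^ j ≠ 0 := factor_ne hq hj1
  have n5 : (1 : ℂ) - q ^ (m - j + 1) ≠ 0 := factor_ne hq (by omega)
  field_simp
  ring

lemma pascalB (hq : ‖q‖ < 1) (m : ℕ) (k : ℤ) :
    qb q (m + 1) k = q ^ k * qb q m k + qb q m (k - 1) := by
  rcases lt_or_ge k 0 with hk | hk
  · rw [qb_eq_zero_of_lt (Or.inl hk), qb_eq_zero_of_lt (Or.inl hk),
      qb_eq_zero_of_lt (Or.inl (by omega))]; ring
  rcases lt_or_ge ((m : ℤ) + 1) k with hk2 | hk2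
  · rw [qb_eq_zero_of_lt (Or.inr hk2), qb_eq_zero_of_lt (Or.inr (by omega)),
      qb_eq_zero_of_lt (Or.inr (by omega))]; ring
  lift k to ℕ using hk with j hj
  rcases Nat.eq_zero_or_pos j with rfl | hj1
  · simp only [Nat.cast_zero]
    rw [show (0:ℤ) - 1 = -1 by ring,
      qb_eq_zero_of_lt (m := m) (k := (-1 : ℤ)) (Or.inl (by omega)), qb_left hq, qb_left hq]
    simp
  have hjm : j ≤ m + 1 := by exact_mod_cast hk2
  rcases Nat.eq_or_lt_of_le hjm with rfl | hjm'
  · rw [show ((m + 1 : ℕ) : ℤ) = (m : ℤ) + 1 by push_cast; ring]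
    rw [show qb q (m+1) ((m:ℤ)+1) = 1 by
      rw [show ((m:ℤ)+1) = ((m+1 : ℕ) : ℤ) by push_cast; ring]; exact qb_right hq (m+1)]
    rw [qb_eq_zero_of_lt (m := m) (k := (m:ℤ)+1) (Or.inr (by omega))]
    rw [show (m : ℤ) + 1 - 1 = (m : ℕ) by push_cast; ring, qb_right hq]
    ring
  have hjm2 : j ≤ m := by omega
  have e1 : qb q (m+1) j = E q (m+1) / (E q j * E q (m + 1 - j)) := qb_nat _ _ (by omega)
  have e2 : qb q m j = E q m / (E q j * E q (m - j)) := qb_nat _ _ hjm2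
  have e3 : qb q m ((j:ℤ) - 1) = E q m / (E q (j-1) * E q (m - (j-1))) := by
    rw [show (j : ℤ) - 1 = ((j - 1 : ℕ) : ℤ) by omega]
    exact qb_nat _ _ (by omega)
  rw [e1, e2, e3, zpow_natCast]
  have hE1 : E q (m+1) = E q m * (1 - q ^ (m+1)) := E_succ m
  have hE2 : E q (m + 1 - j) = E q (m - j) * (1 - q ^ (m - j + 1)) := by
    rw [show m + 1 - j = (m - j) + 1 by omega]; exact E_succ _
  have hE3 : E q j = E q (j - 1) * (1 - q ^ j) := by
    conv_lhs => rw [show j = (j - 1) + 1 by omega, E_succ, show j - 1 + 1 = j by omega]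
  have hE4 : E q (m - (j - 1)) = E q (m - j) * (1 - q ^ (m - j + 1)) := by
    rw [show m - (j - 1) = (m - j) + 1 by omega]; rw [E_succ]
  have hqm : q ^ (m + 1) = q ^ j * q ^ (m - j + 1) := by
    rw [← pow_add, show j + (m - j + 1) = m + 1 by omega]
  rw [hE1, hE2, hE3, hE4, hqm]
  have n1 := E_ne_zero hq m
  have n2 := E_ne_zero hq (j - 1)
  have n3 := E_ne_zero hq (m - j)
  have n4 : (1 : ℂ) - q ^ j ≠ 0 := factor_ne hq hj1
  have n5 : (1 : ℂ) - q ^ (m - j + 1) ≠ 0 := factor_ne hq (by omega)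
  field_simp
  ring

/-- coefficient in the finite triple product -/
noncomputable def c (q z : ℂ) (A B : ℕ) (n : ℤ) : ℂ :=
  (-1) ^ n * q ^ T n * qb q (A + B) (n + B) * z ^ n

lemma c_zero_top (z : ℂ) (A B : ℕ) {n : ℤ} (hn : (A : ℤ) < n) : c q z A B n = 0 := by
  unfold c; rw [qb_eq_zero_of_lt (Or.inr (by push_cast; omega))]; ring

lemma c_zero_bot (z : ℂ) (A B : ℕ) {n : ℤ} (hn : n < -(B : ℤ)) : c q z A B n = 0 := by
  unfold c; rw [qb_eq_zero_of_lt (Or.inl (by omega))]; ring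

lemma keyA (hq0 : q ≠ 0) (hq : ‖q‖ < 1) (z : ℂ) (hz : z ≠ 0) (a b : ℕ) (n : ℤ) :
    c q z a b n - c q z a b (n - 1) * (z * q ^ (a : ℕ)) = c q z (a + 1) b n := by
  unfold c
  rw [show a + 1 + b = (a + b) + 1 by ring, pascalA hq (a + b) (n + b)]
  rw [show n - 1 + (b : ℤ) = n + b - 1 by ring]
  have hqq : q ^ T n * q ^ (((a + b : ℕ) : ℤ) + 1 - (n + b)) = q ^ T (n - 1) * q ^ (a : ℤ) := by
    rw [← zpow_add₀ hq0, ← zpow_add₀ hq0]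
    congr 1
    have h := T_succ (n - 1)
    rw [sub_add_cancel] at h
    push_cast
    omega
  have e2 : (-1 : ℂ) ^ n = (-1) ^ (n - 1) * (-1) := by
    rw [← zpow_add_one₀ (by norm_num : (-1 : ℂ) ≠ 0), sub_add_cancel]
  have e3 : z ^ n = z ^ (n - 1) * z := by rw [← zpow_add_one₀ hz, sub_add_cancel]
  have e5 : q ^ (a : ℕ) = q ^ (a : ℤ) := (zpow_natCast q a).symm
  rw [e2, e3, e5]
  linear_combination ((-1 : ℂ)) ^ (n - 1) * qb q (a + b) (n + b - 1) * z ^ (n - 1) * z * hqq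

lemma keyB (hq0 : q ≠ 0) (hq : ‖q‖ < 1) (z : ℂ) (hz : z ≠ 0) (a b : ℕ) (n : ℤ) :
    c q z a b n - c q z a b (n + 1) * (q / z * q ^ (b : ℕ)) = c q z a (b + 1) n := by
  unfold c
  rw [show a + (b + 1) = (a + b) + 1 by ring, pascalB hq (a + b) (n + (b + 1 : ℕ))]
  rw [show n + ((b + 1 : ℕ) : ℤ) - 1 = n + b by push_cast; ring]
  rw [show n + 1 + (b : ℤ) = n + ((b + 1 : ℕ) : ℤ) by push_cast; ring]
  have hqq : q ^ T n * q ^ (n + ((b + 1 : ℕ) : ℤ)) = q ^ T (n + 1) * q ^ ((b : ℤ) + 1) := by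
    rw [← zpow_add₀ hq0, ← zpow_add₀ hq0]
    congr 1
    have h := T_succ n
    push_cast
    omega
  have e2 : (-1 : ℂ) ^ (n + 1) = (-1) ^ n * (-1) := zpow_add_one₀ (by norm_num) n
  have e3 : z ^ (n + 1) = z ^ n * z := zpow_add_one₀ hz n
  have e5 : (q : ℂ) ^ ((b : ℤ) + 1) = q ^ (b : ℕ) * q := by
    rw [zpow_add_one₀ hq0, zpow_natCast]
  have hzz : z * z⁻¹ = 1 := mul_inv_cancel₀ hz
  rw [e2, e3, div_eq_mul_inv]
  linear_combination
    (-((-1 : ℂ)) ^ n * qb q (a + b) (n + ((b + 1 : ℕ) : ℤ)) * z ^ n) * hqq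
    + (((-1 : ℂ)) ^ n * qb q (a + b) (n + ((b + 1 : ℕ) : ℤ)) * q ^ T (n + 1) * z ^ n * q
        * q ^ (b : ℕ)) * hzz
    + (-((-1 : ℂ)) ^ n * qb q (a + b) (n + ((b + 1 : ℕ) : ℤ)) * z ^ n * q ^ T (n + 1)) * e5

variable {q : ℂ}

lemma stepA (hq0 : q ≠ 0) (hq : ‖q‖ < 1) (z : ℂ) (hz : z ≠ 0) (a b : ℕ)
    (IH : (∏ j ∈ range a, (1 - z * q ^ j)) * (∏ j ∈ range b, (1 - q / z * q ^ j))
      = ∑ n ∈ Icc (-(b : ℤ)) (a : ℤ), c q z a b n) :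
    (∏ j ∈ range (a + 1), (1 - z * q ^ j)) * (∏ j ∈ range b, (1 - q / z * q ^ j))
      = ∑ n ∈ Icc (-(b : ℤ)) ((a : ℤ) + 1), c q z (a + 1) b n := by
  have h1 : (∏ j ∈ range (a + 1), (1 - z * q ^ j)) * (∏ j ∈ range b, (1 - q / z * q ^ j))
      = ((∏ j ∈ range a, (1 - z * q ^ j)) * (∏ j ∈ range b, (1 - q / z * q ^ j)))
        * (1 - z * q ^ a) := by
    rw [prod_range_succ]; ring
  rw [h1, IH, mul_sub, mul_one, Finset.sum_mul]
  have h2 : ∑ n ∈ Icc (-(b : ℤ)) (a : ℤ), c q z a b n * (z * q ^ a)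
      = ∑ n ∈ Icc (-(b : ℤ) + 1) ((a : ℤ) + 1), c q z a b (n - 1) * (z * q ^ a) := by
    rw [← map_add_right_Icc (-(b : ℤ)) (a : ℤ) 1, Finset.sum_map]
    simp [addRightEmbedding]
  have h3 : ∑ n ∈ Icc (-(b : ℤ)) (a : ℤ), c q z a b n
      = ∑ n ∈ Icc (-(b : ℤ)) ((a : ℤ) + 1), c q z a b n := by
    refine Finset.sum_subset (Finset.Icc_subset_Icc le_rfl (by omega)) fun x hx hnx => ?_
    simp only [Finset.mem_Icc] at hx hnx
    exact c_zero_top z a b (by omega)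
  have h4 : ∑ n ∈ Icc (-(b : ℤ) + 1) ((a : ℤ) + 1), c q z a b (n - 1) * (z * q ^ a)
      = ∑ n ∈ Icc (-(b : ℤ)) ((a : ℤ) + 1), c q z a b (n - 1) * (z * q ^ a) := by
    refine Finset.sum_subset (Finset.Icc_subset_Icc (by omega) le_rfl) fun x hx hnx => ?_
    simp only [Finset.mem_Icc] at hx hnx
    rw [c_zero_bot z a b (by omega)]
    ring
  rw [h2, h3, h4, ← Finset.sum_sub_distrib]
  exact Finset.sum_congr rfl fun n _ => keyA hq0 hq z hz a b n

lemma stepB (hq0 : q ≠ 0) (hq : ‖q‖ < 1) (z : ℂ) (hz : z ≠ 0) (a b : ℕ)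
    (IH : (∏ j ∈ range a, (1 - z * q ^ j)) * (∏ j ∈ range b, (1 - q / z * q ^ j))
      = ∑ n ∈ Icc (-(b : ℤ)) (a : ℤ), c q z a b n) :
    (∏ j ∈ range a, (1 - z * q ^ j)) * (∏ j ∈ range (b + 1), (1 - q / z * q ^ j))
      = ∑ n ∈ Icc (-((b : ℤ) + 1)) (a : ℤ), c q z a (b + 1) n := by
  have h1 : (∏ j ∈ range a, (1 - z * q ^ j)) * (∏ j ∈ range (b + 1), (1 - q / z * q ^ j))
      = ((∏ j ∈ range a, (1 - z * q ^ j)) * (∏ j ∈ range b, (1 - q / z * q ^ j)))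
        * (1 - q / z * q ^ b) := by
    rw [prod_range_succ]; ring
  rw [h1, IH, mul_sub, mul_one, Finset.sum_mul]
  have h2 : ∑ n ∈ Icc (-(b : ℤ)) (a : ℤ), c q z a b n * (q / z * q ^ b)
      = ∑ n ∈ Icc (-(b : ℤ) - 1) ((a : ℤ) - 1), c q z a b (n + 1) * (q / z * q ^ b) := by
    have hm : (Icc (-(b : ℤ) - 1) ((a : ℤ) - 1)).map (addRightEmbedding 1)
        = Icc (-(b : ℤ)) (a : ℤ) := by
      rw [map_add_right_Icc]; congr 1 <;> omega
    rw [← hm, Finset.sum_map]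
    simp [addRightEmbedding]
  have h3 : ∑ n ∈ Icc (-(b : ℤ)) (a : ℤ), c q z a b n
      = ∑ n ∈ Icc (-((b : ℤ) + 1)) (a : ℤ), c q z a b n := by
    refine Finset.sum_subset (Finset.Icc_subset_Icc (by omega) le_rfl) fun x hx hnx => ?_
    simp only [Finset.mem_Icc] at hx hnx
    exact c_zero_bot z a b (by omega)
  have h4 : ∑ n ∈ Icc (-(b : ℤ) - 1) ((a : ℤ) - 1), c q z a b (n + 1) * (q / z * q ^ b)
      = ∑ n ∈ Icc (-((b : ℤ) + 1)) (a : ℤ), c q z a b (n + 1) * (q / z * q ^ b) := by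
    refine Finset.sum_subset (Finset.Icc_subset_Icc (by omega) (by omega)) fun x hx hnx => ?_
    simp only [Finset.mem_Icc] at hx hnx
    rw [c_zero_top z a b (by omega)]
    ring
  rw [h2, h3, h4, ← Finset.sum_sub_distrib]
  exact Finset.sum_congr rfl fun n _ => keyB hq0 hq z hz a b n

lemma finiteJTP (hq0 : q ≠ 0) (hq : ‖q‖ < 1) (z : ℂ) (hz : z ≠ 0) (a b : ℕ) :
    (∏ j ∈ range a, (1 - z * q ^ j)) * (∏ j ∈ range b, (1 - q / z * q ^ j))
      = ∑ n ∈ Icc (-(b : ℤ)) (a : ℤ), c q z a b n := by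
  induction b with
  | zero =>
    induction a with
    | zero => simp [c, qb_left hq, T]
    | succ a ih =>
      have := stepA hq0 hq z hz a 0 ih
      simpa using this
  | succ b ih =>
    have := stepB hq0 hq z hz a b ih
    simpa using this


lemma one_sub_ne {v : ℂ} (h : ‖v‖ < 1) : (1 : ℂ) - v ≠ 0 := by
  intro h0
  have hv : v = 1 := by linear_combination -h0
  rw [hv] at h
  simp at h

lemma multipliable_oneSub (hq : ‖q‖ < 1) (x : ℂ) :
    Multipliable fun k : ℕ => 1 - x * q ^ k := by
  have h0 : Tendsto (fun k : ℕ => ‖x * q ^ k‖) atTop (𝓝 0) := by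
    have := (tendsto_pow_atTop_nhds_zero_of_norm_lt_one hq).const_mul x
    simpa using this.norm
  obtain ⟨M, hM⟩ := (h0.eventually_le_const (by norm_num : (0:ℝ) < 1/2)).exists_forall_of_atTop
  set g : ℕ → ℂ := fun k => if k < M then 1 else 1 - x * q ^ k with hgdef
  set h : ℕ → ℂ := fun k => if k < M then 1 - x * q ^ k else 1 with hhdef
  have hfg : (fun k : ℕ => 1 - x * q ^ k) = fun k => g k * h k := by
    funext k
    by_cases hk : k < M <;> simp [hgdef, hhdef, hk]
  rw [hfg]
  have hmh : Multipliable h := by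
    apply multipliable_of_finite_mulSupport
    apply Set.Finite.subset (Set.finite_Iio M)
    intro k hk
    simp only [Function.mem_mulSupport, hhdef] at hk
    by_contra hkM
    simp only [Set.mem_Iio, not_lt] at hkM
    exact hk (by rw [if_neg (by omega)])
  refine Multipliable.mul ?_ hmh
  have hne : ∀ (u : Unit) (k : ℕ), (fun k (_ : Unit) => g k) k u ≠ 0 := by
    intro _ k
    simp only [hgdef]
    split
    · exact one_ne_zero
    · next hk =>
      exact one_sub_ne ((hM k (by omega)).trans_lt (by norm_num))
  have hsum : ∀ (_ : Unit), Summable fun k : ℕ => Complex.log (g k) := by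
    intro _
    apply Summable.of_norm_bounded (g := fun k => 3/2 * (‖x‖ * ‖q‖ ^ k))
    · apply Summable.mul_left
      exact (summable_geometric_of_lt_one (norm_nonneg q) hq).mul_left _
    · intro k
      simp only [hgdef]
      split
      · simp
        positivity
      · next hk =>
        have h1 : ‖x * q ^ k‖ ≤ 1/2 := hM k (by omega)
        have h2 : ‖Complex.log (1 + -(x * q ^ k))‖ ≤ 3/2 * ‖-(x * q ^ k)‖ :=
          Complex.norm_log_one_add_half_le_self (by simpa using h1)
        calc ‖Complex.log (1 - x * q ^ k)‖
            = ‖Complex.log (1 + -(x * q ^ k))‖ := by ring_nf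
          _ ≤ 3/2 * ‖-(x * q ^ k)‖ := h2
          _ = 3/2 * (‖x‖ * ‖q‖ ^ k) := by rw [norm_neg, norm_mul, norm_pow]
  exact Complex.multipliable_of_summable_log (hsum ())

lemma tendsto_partial_prod (hq : ‖q‖ < 1) (x : ℂ) :
    Tendsto (fun N : ℕ => ∏ k ∈ range N, (1 - x * q ^ k)) atTop (𝓝 (qPoch x q)) :=
  (multipliable_oneSub hq x).hasProd.tendsto_prod_nat

lemma tendsto_E (hq : ‖q‖ < 1) :
    Tendsto (fun n : ℕ => E q n) atTop (𝓝 (qPoch q q)) := by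
  have := tendsto_partial_prod hq q
  refine this.congr fun n => ?_
  exact Finset.prod_congr rfl fun k _ => by rw [← pow_succ']

lemma one_sub_sum_le_prod (s : Finset ℕ) (f : ℕ → ℝ) (h0 : ∀ i ∈ s, 0 ≤ f i)
    (h1 : ∀ i ∈ s, f i ≤ 1) : 1 - ∑ i ∈ s, f i ≤ ∏ i ∈ s, (1 - f i) := by
  classical
  induction s using Finset.cons_induction with
  | empty => simp
  | cons a s ha ih =>
    rw [Finset.prod_cons, Finset.sum_cons]
    have hfa0 := h0 a (Finset.mem_cons_self a s)
    have hfa1 := h1 a (Finset.mem_cons_self a s)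
    have ihs := ih (fun i hi => h0 i (Finset.mem_cons_of_mem hi))
      (fun i hi => h1 i (Finset.mem_cons_of_mem hi))
    have hs0 : 0 ≤ ∑ i ∈ s, f i := Finset.sum_nonneg fun i hi => h0 i (Finset.mem_cons_of_mem hi)
    nlinarith

lemma E_norm_le (hq : ‖q‖ < 1) (n : ℕ) :
    ‖E q n‖ ≤ Real.exp (‖q‖ / (1 - ‖q‖)) := by
  have ht0 : (0:ℝ) ≤ ‖q‖ := norm_nonneg q
  rw [E, norm_prod]
  calc ∏ k ∈ range n, ‖1 - q ^ (k + 1)‖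
      ≤ ∏ k ∈ range n, Real.exp (‖q‖ ^ (k + 1)) := by
        refine Finset.prod_le_prod (fun k _ => norm_nonneg _) fun k _ => ?_
        calc ‖1 - q ^ (k+1)‖ ≤ ‖(1:ℂ)‖ + ‖q ^ (k+1)‖ := norm_sub_le _ _
          _ = ‖q‖ ^ (k+1) + 1 := by rw [norm_one, norm_pow]; ring
          _ ≤ Real.exp (‖q‖ ^ (k+1)) := Real.add_one_le_exp _
    _ = Real.exp (∑ k ∈ range n, ‖q‖ ^ (k + 1)) := by rw [Real.exp_sum]
    _ ≤ Real.exp (‖q‖ / (1 - ‖q‖)) := by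
        rw [Real.exp_le_exp]
        have : ∑ k ∈ range n, ‖q‖ ^ (k + 1) = ‖q‖ * ∑ k ∈ range n, ‖q‖ ^ k := by
          rw [Finset.mul_sum]; exact Finset.sum_congr rfl fun k _ => by rw [pow_succ']
        rw [this, div_eq_mul_inv]
        refine mul_le_mul_of_nonneg_left ?_ ht0
        calc ∑ k ∈ range n, ‖q‖ ^ k ≤ ∑' k : ℕ, ‖q‖ ^ k :=
              Summable.sum_le_tsum _ (fun k _ => pow_nonneg ht0 k) (summable_geometric_of_lt_one ht0 hq)
          _ = (1 - ‖q‖)⁻¹ := tsum_geometric_of_lt_one ht0 hq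

lemma E_norm_ge (hq : ‖q‖ < 1) : ∃ L : ℝ, 0 < L ∧ ∀ n, L ≤ ‖E q n‖ := by
  have ht0 : (0:ℝ) ≤ ‖q‖ := norm_nonneg q
  set t := ‖q‖ with htdef
  have hg : Summable fun k : ℕ => t ^ (k + 1) := by
    have := (summable_geometric_of_lt_one ht0 hq).mul_left t
    refine this.congr fun k => ?_
    rw [pow_succ']
  have htail : Tendsto (fun M : ℕ => ∑' k : ℕ, t ^ (k + M + 1)) atTop (𝓝 0) := by
    have h := tendsto_sum_nat_add (f := fun k : ℕ => t ^ (k + 1))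
    refine h.congr fun M => ?_
    exact tsum_congr fun k => by ring_nf
  obtain ⟨M, hM⟩ := (htail.eventually_le_const (by norm_num : (0:ℝ) < 1/2)).exists
  have hfac : ∀ k : ℕ, 0 < 1 - t ^ (k + 1) := by
    intro k
    have : t ^ (k + 1) < 1 := pow_lt_one₀ ht0 hq (Nat.succ_ne_zero k)
    linarith
  have hPpos : ∀ n : ℕ, 0 < ∏ k ∈ range n, (1 - t ^ (k + 1)) :=
    fun n => Finset.prod_pos fun k _ => hfac k
  refine ⟨(∏ k ∈ range M, (1 - t ^ (k + 1))) * (1/2), by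
    have := hPpos M; positivity, fun n => ?_⟩
  have key : (∏ k ∈ range M, (1 - t ^ (k + 1))) * (1/2) ≤ ∏ k ∈ range n, (1 - t ^ (k + 1)) := by
    rcases le_or_gt n M with hn | hn
    · obtain ⟨d, rfl⟩ : ∃ d, M = n + d := ⟨M - n, by omega⟩
      rw [Finset.prod_range_add]
      have h2 : ∏ j ∈ range d, (1 - t ^ (n + j + 1)) ≤ 1 :=
        Finset.prod_le_one (fun k _ => (hfac _).le)
          (fun k _ => by nlinarith [pow_nonneg ht0 (n+k+1)])
      nlinarith [hPpos n, Finset.prod_nonneg (fun (j : ℕ) (_ : j ∈ range d) =>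
        (hfac (n + j)).le)]
    · obtain ⟨d, rfl⟩ : ∃ d, n = M + d := ⟨n - M, by omega⟩
      rw [Finset.prod_range_add]
      have hws : (1:ℝ) - ∑ j ∈ range d, t ^ (M + j + 1)
          ≤ ∏ j ∈ range d, (1 - t ^ (M + j + 1)) := by
        refine one_sub_sum_le_prod _ _ (fun j _ => pow_nonneg ht0 _) fun j _ => ?_
        have := hfac (M + j); linarith
      have hsum : ∑ j ∈ range d, t ^ (M + j + 1) ≤ 1/2 := by
        have hs : Summable fun k : ℕ => t ^ (k + M + 1) := by
          refine ((summable_nat_add_iff M).2 hg).congr fun k => ?_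
          ring_nf
        calc ∑ j ∈ range d, t ^ (M + j + 1)
            = ∑ j ∈ range d, t ^ (j + M + 1) := Finset.sum_congr rfl fun j _ => by ring_nf
          _ ≤ ∑' k : ℕ, t ^ (k + M + 1) := Summable.sum_le_tsum _ (fun k _ => pow_nonneg ht0 _) hs
          _ ≤ 1/2 := hM
      have h2 : (1:ℝ)/2 ≤ ∏ j ∈ range d, (1 - t ^ (M + j + 1)) := by linarith
      nlinarith [hPpos M]
  refine key.trans ?_
  rw [E, norm_prod]
  refine Finset.prod_le_prod (fun k _ => (hfac k).le) fun k _ => ?_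
  calc 1 - t ^ (k + 1) = ‖(1:ℂ)‖ - ‖q ^ (k+1)‖ := by rw [norm_one, norm_pow]
    _ ≤ ‖1 - q ^ (k + 1)‖ := norm_sub_norm_le _ _


lemma T_neg (n : ℤ) : T (-n) = T (n + 1) := by
  have h1 := two_T (-n); have h2 := two_T (n + 1); nlinarith

lemma qPoch_q_ne_zero (hq : ‖q‖ < 1) : qPoch q q ≠ 0 := by
  obtain ⟨L, hL0, hL⟩ := E_norm_ge hq
  have : L ≤ ‖qPoch q q‖ :=
    ge_of_tendsto ((tendsto_E hq).norm) (Eventually.of_forall hL)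
  intro h0
  rw [h0] at this
  simp at this
  linarith

section summable
variable {t s : ℝ}

lemma summable_pos_side (ht0 : 0 < t) (ht1 : t < 1) (hs : 0 < s) :
    Summable (fun n : ℕ => t ^ T (n : ℤ) * s ^ (n : ℤ)) := by
  apply summable_of_ratio_norm_eventually_le (r := 1/2) (by norm_num)
  have hto : Tendsto (fun n : ℕ => t ^ n * s) atTop (𝓝 0) := by
    simpa using (tendsto_pow_atTop_nhds_zero_of_norm_lt_one
      (by rwa [Real.norm_of_nonneg ht0.le])).mul_const s
  filter_upwards [hto.eventually_le_const (by norm_num : (0:ℝ) < 1/2)] with n hn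
  have hTn : T ((n : ℤ) + 1) = T n + n := T_succ n
  have he : t ^ T (((n + 1 : ℕ)) : ℤ) * s ^ (((n + 1 : ℕ)) : ℤ)
      = (t ^ n * s) * (t ^ T (n : ℤ) * s ^ (n : ℤ)) := by
    push_cast
    rw [hTn, zpow_add₀ (ne_of_gt ht0), zpow_add₀ (ne_of_gt hs), zpow_natCast, zpow_one]
    ring
  rw [Real.norm_of_nonneg (by positivity), Real.norm_of_nonneg (by positivity), he]
  have hpos : (0:ℝ) ≤ t ^ T (n : ℤ) * s ^ (n : ℤ) := by positivity
  have hns : 0 ≤ t ^ n * s := by positivity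
  nlinarith

lemma summable_neg_side (ht0 : 0 < t) (ht1 : t < 1) (hs : 0 < s) :
    Summable (fun n : ℕ => t ^ T (-(n : ℤ)) * s ^ (-(n : ℤ))) := by
  apply summable_of_ratio_norm_eventually_le (r := 1/2) (by norm_num)
  have hto : Tendsto (fun n : ℕ => t ^ (n + 1) * s⁻¹) atTop (𝓝 0) := by
    simpa using ((tendsto_pow_atTop_nhds_zero_of_norm_lt_one
      (by rwa [Real.norm_of_nonneg ht0.le])).comp (tendsto_add_atTop_nat 1)).mul_const s⁻¹
  filter_upwards [hto.eventually_le_const (by norm_num : (0:ℝ) < 1/2)] with n hn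
  have he : t ^ T (-((n + 1 : ℕ) : ℤ)) * s ^ (-((n + 1 : ℕ) : ℤ))
      = (t ^ (n + 1) * s⁻¹) * (t ^ T (-(n : ℤ)) * s ^ (-(n : ℤ))) := by
    push_cast
    rw [T_neg, T_neg, show (n : ℤ) + 1 + 1 = ((n : ℤ) + 1) + 1 by ring, T_succ ((n:ℤ)+1)]
    rw [zpow_add₀ (ne_of_gt ht0), show -((n:ℤ)+1) = -(n:ℤ) + (-1) by ring,
      zpow_add₀ (ne_of_gt hs)]
    rw [show ((n:ℤ)+1) = ((n+1 : ℕ) : ℤ) by push_cast; ring, zpow_natCast, zpow_neg_one]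
    ring
  rw [Real.norm_of_nonneg (by positivity), Real.norm_of_nonneg (by positivity), he]
  have hpos : (0:ℝ) ≤ t ^ T (-(n:ℤ)) * s ^ (-(n:ℤ)) := by positivity
  have hns : 0 ≤ t ^ (n+1) * s⁻¹ := by positivity
  nlinarith

lemma summable_zint (ht0 : 0 < t) (ht1 : t < 1) (hs : 0 < s) :
    Summable (fun n : ℤ => t ^ T n * s ^ n) :=
  Summable.of_nat_of_neg (summable_pos_side ht0 ht1 hs)
    (summable_neg_side ht0 ht1 hs)

end summable

lemma norm_jt (hq0 : q ≠ 0) (z : ℂ) (n : ℤ) :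
    ‖(-1 : ℂ) ^ n * q ^ T n * z ^ n‖ = ‖q‖ ^ T n * ‖z‖ ^ n := by
  rw [norm_mul, norm_mul, norm_zpow, norm_zpow, norm_zpow, norm_neg, norm_one, one_zpow]
  ring

lemma summable_norm_jt (hq0 : q ≠ 0) (hq : ‖q‖ < 1) {z : ℂ} (hz : z ≠ 0) :
    Summable fun n : ℤ => ‖(-1 : ℂ) ^ n * q ^ T n * z ^ n‖ := by
  have := summable_zint (t := ‖q‖) (s := ‖z‖) (norm_pos_iff.2 hq0) hq (norm_pos_iff.2 hz)
  exact this.congr fun n => (norm_jt hq0 z n).symm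

lemma qb_norm_le (hq : ‖q‖ < 1) {L : ℝ} (hL0 : 0 < L) (hL : ∀ n, L ≤ ‖E q n‖)
    (m : ℕ) (k : ℤ) : ‖qb q m k‖ ≤ Real.exp (‖q‖ / (1 - ‖q‖)) / (L * L) := by
  unfold qb
  split
  · rw [norm_div, norm_mul]
    apply div_le_div₀ (by positivity) (E_norm_le hq m) (by positivity)
    exact mul_le_mul (hL _) (hL _) hL0.le (norm_nonneg _)
  · rw [norm_zero]
    positivity

lemma jtp (hq0 : q ≠ 0) (hq : ‖q‖ < 1) {z : ℂ} (hz : z ≠ 0) :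
    qPoch q q * theta z q = ∑' n : ℤ, (-1 : ℂ) ^ n * q ^ T n * z ^ n := by
  obtain ⟨L, hL0, hL⟩ := E_norm_ge hq
  have ht0 : (0:ℝ) < ‖q‖ := norm_pos_iff.2 hq0
  have hs0 : (0:ℝ) < ‖z‖ := norm_pos_iff.2 hz
  have hE : qPoch q q ≠ 0 := qPoch_q_ne_zero hq
  set C := Real.exp (‖q‖ / (1 - ‖q‖)) / (L * L) with hC
  have hC0 : 0 < C := by positivity
  -- the finite products tend to theta
  have hLHS : Tendsto (fun N : ℕ => (∏ j ∈ range N, (1 - z * q ^ j))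
      * (∏ j ∈ range N, (1 - q / z * q ^ j))) atTop (𝓝 (theta z q)) :=
    (tendsto_partial_prod hq z).mul (tendsto_partial_prod hq (q / z))
  -- rewrite the finite products via finiteJTP and tsum
  have heq : ∀ N : ℕ, (∏ j ∈ range N, (1 - z * q ^ j)) * (∏ j ∈ range N, (1 - q / z * q ^ j))
      = ∑' n : ℤ, c q z N N n := by
    intro N
    rw [finiteJTP hq0 hq z hz N N]
    symm
    apply tsum_eq_sum
    intro n hn
    simp only [Finset.mem_Icc, not_and_or, not_le] at hn
    rcases hn with hn | hn
    · exact c_zero_bot z N N (by omega)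
    · exact c_zero_top z N N (by omega)
  -- Tannery
  have hTan : Tendsto (fun N : ℕ => ∑' n : ℤ, c q z N N n) atTop
      (𝓝 (∑' n : ℤ, (-1 : ℂ) ^ n * q ^ T n * z ^ n / qPoch q q)) := by
    apply tendsto_tsum_of_dominated_convergence
      (bound := fun n : ℤ => C * (‖q‖ ^ T n * ‖z‖ ^ n))
    · exact (summable_zint ht0 hq hs0).mul_left C
    · intro n
      -- pointwise convergence of coefficients
      have hqb : Tendsto (fun N : ℕ => qb q (N + N) (n + N)) atTop
          (𝓝 (qPoch q q / (qPoch q q * qPoch q q))) := by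
        have h1 : Tendsto (fun N : ℕ => E q (N + N)) atTop (𝓝 (qPoch q q)) :=
          (tendsto_E hq).comp (tendsto_atTop_mono (fun N => Nat.le_add_left N N) tendsto_id)
        have h2 : Tendsto (fun N : ℕ => E q (n + N).toNat) atTop (𝓝 (qPoch q q)) := by
          refine (tendsto_E hq).comp (tendsto_atTop_mono (f := fun N : ℕ => N - n.natAbs)
            (fun N => by show N - n.natAbs ≤ (n + (N:ℤ)).toNat; omega) (tendsto_sub_atTop_nat _))
        have h3 : Tendsto (fun N : ℕ => E q (N + N - (n + N).toNat)) atTop (𝓝 (qPoch q q)) := by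
          refine (tendsto_E hq).comp (tendsto_atTop_mono (f := fun N : ℕ => N - n.natAbs)
            (fun N => by show N - n.natAbs ≤ N + N - (n + (N:ℤ)).toNat; omega)
            (tendsto_sub_atTop_nat _))
        have hne : qPoch q q * qPoch q q ≠ 0 := mul_ne_zero hE hE
        refine (h1.div (h2.mul h3) hne).congr' ?_
        filter_upwards [eventually_ge_atTop n.natAbs] with N hN
        simp only [Pi.div_apply]
        unfold qb
        rw [if_pos ⟨by omega, by push_cast; omega⟩]
      have hconst : Tendsto (fun _ : ℕ => (-1 : ℂ) ^ n * q ^ T n * z ^ n) atTop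
          (𝓝 ((-1 : ℂ) ^ n * q ^ T n * z ^ n)) := tendsto_const_nhds
      have hmul := hconst.mul hqb
      have hrw : ((-1 : ℂ) ^ n * q ^ T n * z ^ n) * (qPoch q q / (qPoch q q * qPoch q q))
          = (-1 : ℂ) ^ n * q ^ T n * z ^ n / qPoch q q := by
        field_simp
      rw [hrw] at hmul
      refine hmul.congr fun N => ?_
      unfold c
      ring
    · filter_upwards with N n
      unfold c
      rw [norm_mul, norm_mul, norm_mul, norm_zpow, norm_zpow, norm_zpow, norm_neg, norm_one,
        one_zpow, one_mul]
      calc ‖q‖ ^ T n * ‖qb q (N + N) (n + N)‖ * ‖z‖ ^ n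
          ≤ ‖q‖ ^ T n * C * ‖z‖ ^ n := by
            have := qb_norm_le hq hL0 hL (N + N) (n + N)
            have h1 : (0:ℝ) ≤ ‖q‖ ^ T n := by positivity
            have h2 : (0:ℝ) ≤ ‖z‖ ^ n := by positivity
            rw [← hC] at this
            exact mul_le_mul_of_nonneg_right (mul_le_mul_of_nonneg_left this h1) h2
        _ = C * (‖q‖ ^ T n * ‖z‖ ^ n) := by ring
  -- identify limits
  have hthetaeq : theta z q = ∑' n : ℤ, (-1 : ℂ) ^ n * q ^ T n * z ^ n / qPoch q q :=
    tendsto_nhds_unique (hLHS.congr heq) hTan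
  rw [tsum_div_const] at hthetaeq
  rw [hthetaeq]
  field_simp


/-- single theta-series term -/
noncomputable def jt (q Z : ℂ) (n : ℤ) : ℂ := (-1) ^ n * q ^ T n * Z ^ n

abbrev V : Type := (ℤ × ℤ) × ℤ × ℤ

def S4 (v : V) : ℤ := v.1.1 + v.1.2 + v.2.1 + v.2.2

def einv (v : V) : V :=
  ((S4 v / 2 - v.1.1, S4 v / 2 - v.1.2), (S4 v / 2 - v.2.1, S4 v / 2 - v.2.2))

/-- normal form of a combined (ϑ-sum plus ϑ₂-sum) term -/
noncomputable def NF (q A1 A2 A3 A4 : ℂ) (v : V) : ℂ :=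
  (1 + (-1) ^ S4 v)
    * q ^ (T (v.1.1 + 1) + T (v.1.2 + 1) + T (v.2.1 + 1) + T (v.2.2 + 1))
    * (A1 ^ v.1.1 * A2 ^ v.1.2 * A3 ^ v.2.1 * A4 ^ v.2.2)

lemma neg_zpow' (Z : ℂ) (m : ℤ) : (-Z) ^ m = (-1) ^ m * Z ^ m := by
  rw [show -Z = (-1) * Z by ring, mul_zpow]

lemma jt_A_mul_q (hq0 : q ≠ 0) (A : ℂ) (m : ℤ) :
    jt q (A * q) m = (-1) ^ m * q ^ T (m + 1) * A ^ m := by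
  unfold jt
  rw [mul_zpow, T_succ, zpow_add₀ hq0]
  ring

lemma jt_neg_A_mul_q (hq0 : q ≠ 0) (A : ℂ) (m : ℤ) :
    jt q (-(A * q)) m = q ^ T (m + 1) * A ^ m := by
  unfold jt
  rw [neg_zpow' (A * q) m, mul_zpow, T_succ, zpow_add₀ hq0]
  have hs : (-1 : ℂ) ^ m * (-1 : ℂ) ^ m = 1 := by
    rw [← mul_zpow]; norm_num
  calc (-1:ℂ) ^ m * q ^ T m * ((-1) ^ m * ((A ^ m) * q ^ m))
      = ((-1:ℂ) ^ m * (-1) ^ m) * (q ^ T m * A ^ m * q ^ m) := by ring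
    _ = q ^ T m * q ^ m * A ^ m := by rw [hs]; ring

lemma term_add (hq0 : q ≠ 0) (A1 A2 A3 A4 : ℂ) (v : V) :
    (jt q (A1 * q) v.1.1 * jt q (A2 * q) v.1.2)
        * (jt q (A3 * q) v.2.1 * jt q (A4 * q) v.2.2)
      + (jt q (-(A1 * q)) v.1.1 * jt q (-(A2 * q)) v.1.2)
        * (jt q (-(A3 * q)) v.2.1 * jt q (-(A4 * q)) v.2.2)
      = NF q A1 A2 A3 A4 v := by
  obtain ⟨⟨m, n⟩, p, r⟩ := v
  simp only [jt_A_mul_q hq0, jt_neg_A_mul_q hq0, NF, S4]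
  have hsgn : (-1 : ℂ) ^ (m + n + p + r) = (-1) ^ m * (-1) ^ n * (-1) ^ p * (-1) ^ r := by
    rw [zpow_add₀ (by norm_num : (-1:ℂ) ≠ 0), zpow_add₀ (by norm_num : (-1:ℂ) ≠ 0),
      zpow_add₀ (by norm_num : (-1:ℂ) ≠ 0)]
  have hqq : q ^ (T (m + 1) + T (n + 1) + T (p + 1) + T (r + 1))
      = q ^ T (m + 1) * q ^ T (n + 1) * q ^ T (p + 1) * q ^ T (r + 1) := by
    rw [zpow_add₀ hq0, zpow_add₀ hq0, zpow_add₀ hq0]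
  rw [hsgn, hqq]
  ring

lemma NF_zero_of_odd {A1 A2 A3 A4 : ℂ} {v : V} (h : ¬ Even (S4 v)) :
    NF q A1 A2 A3 A4 v = 0 := by
  unfold NF
  rw [Odd.neg_one_zpow (Int.not_even_iff_odd.1 h)]
  ring

lemma S4_einv {v : V} (hv : Even (S4 v)) : S4 (einv v) = S4 v := by
  obtain ⟨⟨a, b⟩, c, d⟩ := v
  obtain ⟨s, hs⟩ := hv
  simp only [einv, S4] at *
  omega

lemma einv_invol {v : V} (hv : Even (S4 v)) : einv (einv v) = v := by
  obtain ⟨⟨a, b⟩, c, d⟩ := v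
  obtain ⟨s, hs⟩ := hv
  simp only [einv, S4, Prod.mk.injEq] at *
  refine ⟨⟨?_, ?_⟩, ?_, ?_⟩ <;> omega

lemma mono_prod {w x y z : ℂ} (hw : w ≠ 0) (hx : x ≠ 0) (hy : y ≠ 0) (hz : z ≠ 0)
    (a b c d : ℤ) :
    (x * y * z / w) ^ a * (w * y * z / x) ^ b * (w * x * z / y) ^ c * (w * x * y / z) ^ d
      = w ^ (b + c + d - a) * x ^ (a + c + d - b) * y ^ (a + b + d - c)
        * z ^ (a + b + c - d) := by
  simp only [div_zpow, mul_zpow, zpow_sub₀ hw, zpow_sub₀ hx, zpow_sub₀ hy, zpow_sub₀ hz,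
    zpow_add₀ hw, zpow_add₀ hx, zpow_add₀ hy, zpow_add₀ hz]
  field_simp

lemma sq_zpow (u : ℂ) (k : ℤ) : (u ^ 2) ^ k = u ^ (2 * k) := by
  rw [← zpow_natCast u 2, ← zpow_mul]
  norm_num

lemma NF_key {w x y z : ℂ} (hw : w ≠ 0) (hx : x ≠ 0) (hy : y ≠ 0) (hz : z ≠ 0)
    {v : V} (hv : Even (S4 v)) :
    NF q (w ^ 2) (x ^ 2) (y ^ 2) (z ^ 2) (einv v)
      = NF q (x * y * z / w) (w * y * z / x) (w * x * z / y) (w * x * y / z) v := by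
  obtain ⟨⟨a, b⟩, c, d⟩ := v
  obtain ⟨s, hs⟩ := hv
  have hS : S4 ((a, b), c, d) = a + b + c + d := rfl
  have hdiv : S4 ((a, b), c, d) / 2 = s := by rw [hS]; omega
  have hE : einv ((a, b), c, d) = ((s - a, s - b), (s - c, s - d)) := by
    simp only [einv, hdiv]
  rw [hE]
  unfold NF
  have hsum : a + b + c + d = s + s := by rw [hS] at hs; exact hs
  have hsgn1 : (-1 : ℂ) ^ S4 ((s - a, s - b), (s - c, s - d)) = 1 :=
    Even.neg_one_zpow (by simp only [S4]; exact ⟨s, by omega⟩)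
  have hsgn2 : (-1 : ℂ) ^ S4 ((a, b), c, d) = 1 :=
    Even.neg_one_zpow (by simp only [S4]; exact ⟨s, by omega⟩)
  rw [hsgn1, hsgn2]
  have h2 : ∀ u : ℤ, 2 * T (u + 1) = (u + 1) * u := by
    intro u
    have h := two_T (u + 1)
    linear_combination h
  have hTeq : T (s - a + 1) + T (s - b + 1) + T (s - c + 1) + T (s - d + 1)
      = T (a + 1) + T (b + 1) + T (c + 1) + T (d + 1) := by
    have k1 := h2 (s - a); have k2 := h2 (s - b); have k3 := h2 (s - c); have k4 := h2 (s - d)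
    have k5 := h2 a; have k6 := h2 b; have k7 := h2 c; have k8 := h2 d
    suffices h : 2 * (T (s - a + 1) + T (s - b + 1) + T (s - c + 1) + T (s - d + 1))
        = 2 * (T (a + 1) + T (b + 1) + T (c + 1) + T (d + 1)) by omega
    linear_combination k1 + k2 + k3 + k4 - k5 - k6 - k7 - k8 - (2 * s + 2) * hsum
  rw [hTeq]
  -- monomials
  have hmono := mono_prod hw hx hy hz a b c d
  simp only [sq_zpow]
  rw [show (2 : ℤ) * (s - a) = b + c + d - a by omega,
    show (2 : ℤ) * (s - b) = a + c + d - b by omega,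
    show (2 : ℤ) * (s - c) = a + b + d - c by omega,
    show (2 : ℤ) * (s - d) = a + b + c - d by omega, ← hmono]


lemma summable_norm_jt' (hq0 : q ≠ 0) (hq : ‖q‖ < 1) {Z : ℂ} (hZ : Z ≠ 0) :
    Summable fun n : ℤ => ‖jt q Z n‖ :=
  (summable_norm_jt hq0 hq hZ).congr fun n => rfl

noncomputable def Gterm (q Z1 Z2 Z3 Z4 : ℂ) (v : V) : ℂ :=
  (jt q Z1 v.1.1 * jt q Z2 v.1.2) * (jt q Z3 v.2.1 * jt q Z4 v.2.2)

lemma summable_norm_12 (hq0 : q ≠ 0) (hq : ‖q‖ < 1) {Z1 Z2 : ℂ} (h1 : Z1 ≠ 0) (h2 : Z2 ≠ 0) :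
    Summable fun p : ℤ × ℤ => ‖jt q Z1 p.1 * jt q Z2 p.2‖ := by
  have := (summable_norm_jt' hq0 hq h1).mul_of_nonneg (summable_norm_jt' hq0 hq h2)
    (fun n => norm_nonneg _) (fun n => norm_nonneg _)
  exact this.congr fun p => (norm_mul _ _).symm

lemma summable_norm_G (hq0 : q ≠ 0) (hq : ‖q‖ < 1) {Z1 Z2 Z3 Z4 : ℂ}
    (h1 : Z1 ≠ 0) (h2 : Z2 ≠ 0) (h3 : Z3 ≠ 0) (h4 : Z4 ≠ 0) :
    Summable fun v : V => ‖Gterm q Z1 Z2 Z3 Z4 v‖ := by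
  have := (summable_norm_12 hq0 hq h1 h2).mul_of_nonneg (summable_norm_12 hq0 hq h3 h4)
    (fun n => norm_nonneg _) (fun n => norm_nonneg _)
  exact this.congr fun v => (norm_mul _ _).symm

lemma four_tsum (hq0 : q ≠ 0) (hq : ‖q‖ < 1) {Z1 Z2 Z3 Z4 : ℂ}
    (h1 : Z1 ≠ 0) (h2 : Z2 ≠ 0) (h3 : Z3 ≠ 0) (h4 : Z4 ≠ 0) :
    ((∑' n : ℤ, jt q Z1 n) * (∑' n : ℤ, jt q Z2 n))
      * ((∑' n : ℤ, jt q Z3 n) * (∑' n : ℤ, jt q Z4 n))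
      = ∑' v : V, Gterm q Z1 Z2 Z3 Z4 v := by
  rw [tsum_mul_tsum_of_summable_norm (summable_norm_jt' hq0 hq h1)
    (summable_norm_jt' hq0 hq h2),
    tsum_mul_tsum_of_summable_norm (summable_norm_jt' hq0 hq h3)
    (summable_norm_jt' hq0 hq h4),
    tsum_mul_tsum_of_summable_norm (summable_norm_12 hq0 hq h1 h2)
    (summable_norm_12 hq0 hq h3 h4)]
  rfl

lemma tsum_split (hq0 : q ≠ 0) (hq : ‖q‖ < 1) {A1 A2 A3 A4 : ℂ}
    (h1 : A1 ≠ 0) (h2 : A2 ≠ 0) (h3 : A3 ≠ 0) (h4 : A4 ≠ 0) :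
    (∑' v : V, Gterm q (A1 * q) (A2 * q) (A3 * q) (A4 * q) v)
      + (∑' v : V, Gterm q (-(A1 * q)) (-(A2 * q)) (-(A3 * q)) (-(A4 * q)) v)
      = ∑' v : V, NF q A1 A2 A3 A4 v := by
  have hZ : ∀ {A : ℂ}, A ≠ 0 → A * q ≠ 0 := fun h => mul_ne_zero h hq0
  have hZn : ∀ {A : ℂ}, A ≠ 0 → -(A * q) ≠ 0 := fun h => neg_ne_zero.2 (mul_ne_zero h hq0)
  rw [← Summable.tsum_add
    ((summable_norm_G hq0 hq (hZ h1) (hZ h2) (hZ h3) (hZ h4)).of_norm)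
    ((summable_norm_G hq0 hq (hZn h1) (hZn h2) (hZn h3) (hZn h4)).of_norm)]
  exact tsum_congr fun v => term_add hq0 A1 A2 A3 A4 v

lemma tsum_NF_eq (hq0 : q ≠ 0) {w x y z : ℂ}
    (hw : w ≠ 0) (hx : x ≠ 0) (hy : y ≠ 0) (hz : z ≠ 0) :
    (∑' v : V, NF q (w ^ 2) (x ^ 2) (y ^ 2) (z ^ 2) v)
      = ∑' v : V, NF q (x * y * z / w) (w * y * z / x) (w * x * z / y) (w * x * y / z) v := by
  have hEvG : ∀ v : V, NF q (w ^ 2) (x ^ 2) (y ^ 2) (z ^ 2) v ≠ 0 → Even (S4 v) := by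
    intro v h; by_contra hodd; exact h (NF_zero_of_odd hodd)
  have hEvH : ∀ v : V,
      NF q (x * y * z / w) (w * y * z / x) (w * x * z / y) (w * x * y / z) v ≠ 0
        → Even (S4 v) := by
    intro v h; by_contra hodd; exact h (NF_zero_of_odd hodd)
  apply tsum_eq_tsum_of_ne_zero_bij (fun p => einv p.1)
  · intro a b hab
    have ha := hEvH a.1 a.2
    have hb := hEvH b.1 b.2
    have hab' : einv (a : V) = einv (b : V) := hab
    have : (a.1 : V) = b.1 := by
      rw [← einv_invol ha, ← einv_invol hb, hab']
    exact Subtype.ext this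
  · intro v hv
    have hev : Even (S4 v) := hEvG v hv
    have hevi : Even (S4 (einv v)) := by rw [S4_einv hev]; exact hev
    have hne : NF q (x * y * z / w) (w * y * z / x) (w * x * z / y) (w * x * y / z)
        (einv v) ≠ 0 := by
      rw [← NF_key hw hx hy hz hevi, einv_invol hev]
      exact hv
    exact ⟨⟨einv v, hne⟩, einv_invol hev⟩
  · intro x'
    exact NF_key hw hx hy hz (hEvH x'.1 x'.2)

end WW

/-- Product form of the Whittaker–Watson addition formula
`ϑ₁(w)ϑ₁(x)ϑ₁(y)ϑ₁(z) + ϑ₂(w)ϑ₂(x)ϑ₂(y)ϑ₂(z)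
  = ϑ₁(w')ϑ₁(x')ϑ₁(y')ϑ₁(z') + ϑ₂(w')ϑ₂(x')ϑ₂(y')ϑ₂(z')`. -/
theorem whittaker_watson_addition (q : ℂ) (hq0 : q ≠ 0) (hq : ‖q‖ < 1)
    (w x y z : ℂ) (hw : w ≠ 0) (hx : x ≠ 0) (hy : y ≠ 0) (hz : z ≠ 0) :
    theta (w ^ 2 * q) q * theta (x ^ 2 * q) q * theta (y ^ 2 * q) q * theta (z ^ 2 * q) q
      + theta (-(w ^ 2 * q)) q * theta (-(x ^ 2 * q)) q
          * theta (-(y ^ 2 * q)) q * theta (-(z ^ 2 * q)) q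
      = theta (q * x * y * z / w) q * theta (q * w * y * z / x) q
          * theta (q * w * x * z / y) q * theta (q * w * x * y / z) q
        + theta (-(q * x * y * z / w)) q * theta (-(q * w * y * z / x)) q
            * theta (-(q * w * x * z / y)) q * theta (-(q * w * x * y / z)) q := by
  open WW in
  rw [show q * x * y * z / w = x * y * z / w * q by ring,
    show q * w * y * z / x = w * y * z / x * q by ring,
    show q * w * x * z / y = w * x * z / y * q by ring,
    show q * w * x * y / z = w * x * y / z * q by ring]
  have hP : qPoch q q ≠ 0 := WW.qPoch_q_ne_zero hq
  set P := qPoch q q with hPdef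
  have hjtp : ∀ Z : ℂ, Z ≠ 0 → P * theta Z q = ∑' n : ℤ, WW.jt q Z n := fun Z hZ =>
    (WW.jtp hq0 hq hZ).trans (tsum_congr fun n => rfl)
  have hA1 : (w ^ 2 : ℂ) ≠ 0 := pow_ne_zero 2 hw
  have hA2 : (x ^ 2 : ℂ) ≠ 0 := pow_ne_zero 2 hx
  have hA3 : (y ^ 2 : ℂ) ≠ 0 := pow_ne_zero 2 hy
  have hA4 : (z ^ 2 : ℂ) ≠ 0 := pow_ne_zero 2 hz
  have hB1 : (x * y * z / w : ℂ) ≠ 0 :=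
    div_ne_zero (mul_ne_zero (mul_ne_zero hx hy) hz) hw
  have hB2 : (w * y * z / x : ℂ) ≠ 0 :=
    div_ne_zero (mul_ne_zero (mul_ne_zero hw hy) hz) hx
  have hB3 : (w * x * z / y : ℂ) ≠ 0 :=
    div_ne_zero (mul_ne_zero (mul_ne_zero hw hx) hz) hy
  have hB4 : (w * x * y / z : ℂ) ≠ 0 :=
    div_ne_zero (mul_ne_zero (mul_ne_zero hw hx) hy) hz
  have hZ : ∀ {A : ℂ}, A ≠ 0 → A * q ≠ 0 := fun h => mul_ne_zero h hq0
  have hZn : ∀ {A : ℂ}, A ≠ 0 → -(A * q) ≠ 0 := fun h => neg_ne_zero.2 (mul_ne_zero h hq0)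
  have e1 : ((P * theta (w ^ 2 * q) q) * (P * theta (x ^ 2 * q) q))
      * ((P * theta (y ^ 2 * q) q) * (P * theta (z ^ 2 * q) q))
      = ∑' v : WW.V, WW.Gterm q (w ^ 2 * q) (x ^ 2 * q) (y ^ 2 * q) (z ^ 2 * q) v := by
    rw [hjtp _ (hZ hA1), hjtp _ (hZ hA2), hjtp _ (hZ hA3), hjtp _ (hZ hA4)]
    exact WW.four_tsum hq0 hq (hZ hA1) (hZ hA2) (hZ hA3) (hZ hA4)
  have e2 : ((P * theta (-(w ^ 2 * q)) q) * (P * theta (-(x ^ 2 * q)) q))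
      * ((P * theta (-(y ^ 2 * q)) q) * (P * theta (-(z ^ 2 * q)) q))
      = ∑' v : WW.V, WW.Gterm q (-(w ^ 2 * q)) (-(x ^ 2 * q)) (-(y ^ 2 * q)) (-(z ^ 2 * q)) v := by
    rw [hjtp _ (hZn hA1), hjtp _ (hZn hA2), hjtp _ (hZn hA3), hjtp _ (hZn hA4)]
    exact WW.four_tsum hq0 hq (hZn hA1) (hZn hA2) (hZn hA3) (hZn hA4)
  have e3 : ((P * theta (x * y * z / w * q) q) * (P * theta (w * y * z / x * q) q))
      * ((P * theta (w * x * z / y * q) q) * (P * theta (w * x * y / z * q) q))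
      = ∑' v : WW.V, WW.Gterm q (x * y * z / w * q) (w * y * z / x * q)
          (w * x * z / y * q) (w * x * y / z * q) v := by
    rw [hjtp _ (hZ hB1), hjtp _ (hZ hB2), hjtp _ (hZ hB3), hjtp _ (hZ hB4)]
    exact WW.four_tsum hq0 hq (hZ hB1) (hZ hB2) (hZ hB3) (hZ hB4)
  have e4 : ((P * theta (-(x * y * z / w * q)) q) * (P * theta (-(w * y * z / x * q)) q))
      * ((P * theta (-(w * x * z / y * q)) q) * (P * theta (-(w * x * y / z * q)) q))
      = ∑' v : WW.V, WW.Gterm q (-(x * y * z / w * q)) (-(w * y * z / x * q))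
          (-(w * x * z / y * q)) (-(w * x * y / z * q)) v := by
    rw [hjtp _ (hZn hB1), hjtp _ (hZn hB2), hjtp _ (hZn hB3), hjtp _ (hZn hB4)]
    exact WW.four_tsum hq0 hq (hZn hB1) (hZn hB2) (hZn hB3) (hZn hB4)
  have key : P ^ 4 * (theta (w ^ 2 * q) q * theta (x ^ 2 * q) q * theta (y ^ 2 * q) q
        * theta (z ^ 2 * q) q
      + theta (-(w ^ 2 * q)) q * theta (-(x ^ 2 * q)) q * theta (-(y ^ 2 * q)) q
        * theta (-(z ^ 2 * q)) q)
      = P ^ 4 * (theta (x * y * z / w * q) q * theta (w * y * z / x * q) q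
          * theta (w * x * z / y * q) q * theta (w * x * y / z * q) q
        + theta (-(x * y * z / w * q)) q * theta (-(w * y * z / x * q)) q
          * theta (-(w * x * z / y * q)) q * theta (-(w * x * y / z * q)) q) := by
    calc P ^ 4 * (theta (w ^ 2 * q) q * theta (x ^ 2 * q) q * theta (y ^ 2 * q) q
          * theta (z ^ 2 * q) q
        + theta (-(w ^ 2 * q)) q * theta (-(x ^ 2 * q)) q * theta (-(y ^ 2 * q)) q
          * theta (-(z ^ 2 * q)) q)
        = ((P * theta (w ^ 2 * q) q) * (P * theta (x ^ 2 * q) q))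
            * ((P * theta (y ^ 2 * q) q) * (P * theta (z ^ 2 * q) q))
          + ((P * theta (-(w ^ 2 * q)) q) * (P * theta (-(x ^ 2 * q)) q))
            * ((P * theta (-(y ^ 2 * q)) q) * (P * theta (-(z ^ 2 * q)) q)) := by ring
      _ = (∑' v : WW.V, WW.Gterm q (w ^ 2 * q) (x ^ 2 * q) (y ^ 2 * q) (z ^ 2 * q) v)
          + ∑' v : WW.V, WW.Gterm q (-(w ^ 2 * q)) (-(x ^ 2 * q)) (-(y ^ 2 * q))
              (-(z ^ 2 * q)) v := by rw [e1, e2]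
      _ = ∑' v : WW.V, WW.NF q (w ^ 2) (x ^ 2) (y ^ 2) (z ^ 2) v :=
          WW.tsum_split hq0 hq hA1 hA2 hA3 hA4
      _ = ∑' v : WW.V, WW.NF q (x * y * z / w) (w * y * z / x) (w * x * z / y)
            (w * x * y / z) v := WW.tsum_NF_eq hq0 hw hx hy hz
      _ = (∑' v : WW.V, WW.Gterm q (x * y * z / w * q) (w * y * z / x * q)
            (w * x * z / y * q) (w * x * y / z * q) v)
          + ∑' v : WW.V, WW.Gterm q (-(x * y * z / w * q)) (-(w * y * z / x * q))
              (-(w * x * z / y * q)) (-(w * x * y / z * q)) v :=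
          (WW.tsum_split hq0 hq hB1 hB2 hB3 hB4).symm
      _ = ((P * theta (x * y * z / w * q) q) * (P * theta (w * y * z / x * q) q))
            * ((P * theta (w * x * z / y * q) q) * (P * theta (w * x * y / z * q) q))
          + ((P * theta (-(x * y * z / w * q)) q) * (P * theta (-(w * y * z / x * q)) q))
            * ((P * theta (-(w * x * z / y * q)) q)
              * (P * theta (-(w * x * y / z * q)) q)) := by rw [e3, e4]
      _ = P ^ 4 * (theta (x * y * z / w * q) q * theta (w * y * z / x * q) q
            * theta (w * x * z / y * q) q * theta (w * x * y / z * q) q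
          + theta (-(x * y * z / w * q)) q * theta (-(w * y * z / x * q)) q
            * theta (-(w * x * z / y * q)) q * theta (-(w * x * y / z * q)) q) := by ring
  exact mul_left_cancel₀ (pow_ne_zero 4 hP) key
end

section
/- (Product form of a second Whittaker–Watson addition formula.) Let q be a complex number with 0 < |q| < 1 and let θ(z;q²) = (z, q²/z; q²)_∞ for z ≠ 0. Then for all nonzero complex numbers w, x, y, z: 2 θ(−qw²;q²) θ(−qx²;q²) θ(−qy²;q²) θ(−qz²;q²) = −q w x y z · θ(q² x y z / w; q²) θ(q² w y z / x; q²) θ(q² w x z / y; q²) θ(q² w x y / z; q²) + q w x y z · θ(−q² x y z / w; q²) θ(−q² w y z / x; q²) θ(−q² w x z / y; q²) θ(−q² w x y / z; q²) + θ(−q x y z / w; q²) θ(−q w y z / x; q²) θ(−q w x z / y; q²) θ(−q w x y / z; q²) + θ(q x y z / w; q²) θ(q w y z / x; q²) θ(q w x z / y; q²) θ(q w x y / z; q²). -/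
open Filter Topology


namespace WW

lemma small_tail {a Q : ℂ} (hQ : ‖Q‖ < 1) :
    ∃ k₀ : ℕ, ∀ k, k₀ ≤ k → ‖a * Q ^ k‖ ≤ 1/2 := by
  have h0 : Tendsto (fun k : ℕ => ‖a‖ * ‖Q‖ ^ k) atTop (𝓝 0) := by
    simpa using (tendsto_pow_atTop_nhds_zero_of_lt_one (norm_nonneg Q) hQ).const_mul ‖a‖
  obtain ⟨k₀, hk₀⟩ := (h0.eventually_le_const (by norm_num : (0:ℝ) < 1/2)).exists_forall_of_atTop
  exact ⟨k₀, fun k hk => by simpa [norm_mul, norm_pow] using hk₀ k hk⟩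

lemma factor_ne_zero {x : ℂ} (hx : ‖x‖ < 1) : (1 : ℂ) - x ≠ 0 := by
  intro h
  have : x = 1 := by linear_combination -h
  simp [this] at hx

lemma log_summable' {a Q : ℂ} (hQ : ‖Q‖ < 1)
    (hsmall : ∀ k : ℕ, ‖a * Q ^ k‖ ≤ 1/2) :
    Summable (fun k : ℕ => Complex.log (1 - a * Q ^ k)) := by
  apply Summable.of_norm_bounded (g := fun k => (3/2) * (‖a‖ * ‖Q‖ ^ k))
    (((summable_geometric_of_lt_one (norm_nonneg Q) hQ).mul_left ‖a‖).mul_left _)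
  intro k
  have h2 : ‖-(a * Q ^ k)‖ ≤ 1/2 := by rw [norm_neg]; exact hsmall k
  calc ‖Complex.log (1 - a * Q ^ k)‖
      = ‖Complex.log (1 + -(a * Q ^ k))‖ := by ring_nf
    _ ≤ 3/2 * ‖-(a * Q ^ k)‖ := Complex.norm_log_one_add_half_le_self h2
    _ = 3/2 * (‖a‖ * ‖Q‖ ^ k) := by rw [norm_neg, norm_mul, norm_pow]

lemma mult_aux (a : ℂ) {Q : ℂ} (hQ : ‖Q‖ < 1) :
    Multipliable (fun k : ℕ => 1 - a * Q ^ k) := by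
  obtain ⟨k₀, hk₀⟩ := small_tail (a := a) hQ
  have hg : Multipliable (fun k : ℕ => if k < k₀ then 1 - a * Q ^ k else 1) := by
    apply multipliable_of_ne_finset_one (s := Finset.range k₀)
    intro b hb
    have : ¬ b < k₀ := by simpa using hb
    simp [this]
  have hh : Multipliable (fun k : ℕ => if k < k₀ then 1 else 1 - a * Q ^ k) := by
    have key : ∀ k : ℕ, (if k < k₀ then (1:ℂ) else 1 - a * Q ^ k) ≠ 0 := by
      intro k
      split_ifs with h
      · exact one_ne_zero
      · exact factor_ne_zero (lt_of_le_of_lt (hk₀ k (by omega)) (by norm_num))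
    have hlog : Summable (fun k : ℕ => Complex.log (if k < k₀ then (1:ℂ) else 1 - a * Q ^ k)) := by
      apply Summable.of_norm_bounded (g := fun k => (3/2) * (‖a‖ * ‖Q‖ ^ k))
        (((summable_geometric_of_lt_one (norm_nonneg Q) hQ).mul_left ‖a‖).mul_left _)
      intro k
      split_ifs with h
      · simp only [Complex.log_one, norm_zero]
        positivity
      · have h2 : ‖-(a * Q ^ k)‖ ≤ 1/2 := by rw [norm_neg]; exact hk₀ k (by omega)
        calc ‖Complex.log (1 - a * Q ^ k)‖
            = ‖Complex.log (1 + -(a * Q ^ k))‖ := by ring_nf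
          _ ≤ 3/2 * ‖-(a * Q ^ k)‖ := Complex.norm_log_one_add_half_le_self h2
          _ = 3/2 * (‖a‖ * ‖Q‖ ^ k) := by rw [norm_neg, norm_mul, norm_pow]
    exact Complex.multipliable_of_summable_log hlog
  have := hg.mul hh
  apply this.congr
  intro k
  split_ifs <;> ring

lemma qPoch_ne_zero {a Q : ℂ} (hQ : ‖Q‖ < 1) (h : ∀ k : ℕ, (1:ℂ) - a * Q ^ k ≠ 0) :
    qPoch a Q ≠ 0 := by
  obtain ⟨k₀, hk₀⟩ := small_tail (a := a) hQ
  have hlog : Summable (fun k : ℕ => Complex.log (1 - a * Q ^ k)) := by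
    rw [← summable_nat_add_iff k₀]
    have : ∀ k : ℕ, (1:ℂ) - a * Q ^ (k + k₀) = 1 - (a * Q ^ k₀) * Q ^ k := by
      intro k; rw [mul_assoc, ← pow_add, add_comm k₀ k]
    simp only [this]
    apply log_summable' hQ
    intro k
    rw [mul_assoc, ← pow_add]
    exact hk₀ _ (by omega)
  have h2 := Complex.cexp_tsum_eq_tprod (f := fun k => 1 - a * Q ^ k) (fun k => h k) hlog
  rw [qPoch, ← h2]
  exact Complex.exp_ne_zero _

lemma tendsto_partial (a : ℂ) {Q : ℂ} (hQ : ‖Q‖ < 1) :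
    Tendsto (fun N => ∏ k ∈ Finset.range N, (1 - a * Q ^ k)) atTop (𝓝 (qPoch a Q)) :=
  (mult_aux a hQ).hasProd.tendsto_prod_nat


lemma ratio_nat {r s : ℝ} (hr0 : 0 < r) (hr : r < 1) (hs : 0 < s) :
    Summable (fun n : ℕ => r ^ (n^2) * s ^ n) := by
  apply summable_of_ratio_norm_eventually_le (r := 1/2) (by norm_num)
  have h0 : Tendsto (fun n : ℕ => (r * ((r^2) ^ n * s)) : ℕ → ℝ) atTop (𝓝 0) := by
    have := (tendsto_pow_atTop_nhds_zero_of_lt_one (by positivity)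
      (by nlinarith : r^2 < 1)).mul_const s
    simpa using (this.const_mul r)
  filter_upwards [h0.eventually_le_const (by norm_num : (0:ℝ) < 1/2)] with n hn
  have he : r ^ ((n+1)^2) * s ^ (n+1) = (r ^ (n^2) * s ^ n) * (r * ((r^2)^n * s)) := by
    ring
  rw [Real.norm_eq_abs, Real.norm_eq_abs, abs_of_pos (by positivity), abs_of_pos (by positivity), he]
  have h1 : (0:ℝ) ≤ r ^ (n^2) * s ^ n := by positivity
  calc r ^ n ^ 2 * s ^ n * (r * ((r^2)^n * s)) ≤ r ^ n ^ 2 * s ^ n * (1/2) := by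
        apply mul_le_mul_of_nonneg_left hn h1
    _ = 1/2 * (r ^ n^2 * s ^ n) := by ring

lemma summable_norm_zint {q t : ℂ} (hq0 : q ≠ 0) (hq : ‖q‖ < 1) (ht : t ≠ 0) :
    Summable (fun n : ℤ => ‖q ^ (n^2) * t ^ n‖) := by
  have hq0' : 0 < ‖q‖ := norm_pos_iff.mpr hq0
  have ht0' : 0 < ‖t‖ := norm_pos_iff.mpr ht
  have key : ∀ n : ℤ, ‖q ^ (n^2) * t ^ n‖ = ‖q‖ ^ (n^2) * ‖t‖ ^ n := by
    intro n; rw [norm_mul, norm_zpow, norm_zpow]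
  simp only [key]
  apply Summable.of_nat_of_neg
  · have := ratio_nat hq0' hq ht0'
    apply this.congr
    intro n
    rw [show ((n:ℤ)^2) = ((n^2 : ℕ) : ℤ) by push_cast; ring, zpow_natCast, zpow_natCast]
  · have := ratio_nat hq0' hq (by positivity : (0:ℝ) < ‖t‖⁻¹)
    apply this.congr
    intro n
    rw [show ((-n:ℤ)^2) = ((n^2 : ℕ) : ℤ) by push_cast; ring, zpow_natCast,
      zpow_neg, zpow_natCast, inv_pow]


noncomputable def bP (Q : ℂ) (M : ℕ) : ℂ := ∏ k ∈ Finset.range M, (1 - Q ^ (k+1))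

noncomputable def dP (Q : ℂ) (m : ℤ) : ℂ := if 0 ≤ m then (bP Q m.toNat)⁻¹ else 0

noncomputable def cP (Q : ℂ) (N : ℕ) (n : ℤ) : ℂ :=
  bP Q (2*N) * (dP Q ((N:ℤ) - n) * dP Q ((N:ℤ) + n))

lemma bP_ne_zero {Q : ℂ} (hQ : ‖Q‖ < 1) (M : ℕ) : bP Q M ≠ 0 := by
  apply Finset.prod_ne_zero_iff.mpr
  intro k _
  apply factor_ne_zero
  rw [norm_pow]
  exact pow_lt_one₀ (norm_nonneg Q) hQ (by omega)

lemma bP_succ (Q : ℂ) (M : ℕ) : bP Q (M+1) = bP Q M * (1 - Q ^ (M+1)) :=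
  Finset.prod_range_succ _ _

lemma dP_neg {Q : ℂ} {m : ℤ} (hm : m < 0) : dP Q m = 0 := by
  simp [dP, not_le.mpr hm]

lemma dP_natCast (Q : ℂ) (M : ℕ) : dP Q (M : ℤ) = (bP Q M)⁻¹ := by
  simp [dP]

lemma dP_step {Q : ℂ} (hQ : ‖Q‖ < 1) {m : ℤ} (hm : -1 ≤ m) :
    dP Q m = (1 - Q ^ (m+1)) * dP Q (m+1) := by
  rcases eq_or_lt_of_le hm with h | h
  · rw [← h]; norm_num [dP_neg]
  · have h0 : 0 ≤ m := by omega
    obtain ⟨M, rfl⟩ := Int.eq_ofNat_of_zero_le h0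
    have hc : ((M:ℤ) + 1) = ((M + 1 : ℕ) : ℤ) := by push_cast; ring
    rw [hc, dP_natCast, dP_natCast, zpow_natCast, bP_succ]
    have h1 := bP_ne_zero hQ M
    have h2 : (1 : ℂ) - Q ^ (M+1) ≠ 0 := by
      apply factor_ne_zero; rw [norm_pow]
      exact pow_lt_one₀ (norm_nonneg Q) hQ (by omega)
    field_simp

lemma cP_zero_outside {Q : ℂ} (N : ℕ) (n : ℤ) (hn : n ∉ Finset.Icc (-(N:ℤ)) N) :
    cP Q N n = 0 := by
  rw [Finset.mem_Icc] at hn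
  rcases not_and_or.mp hn with h | h
  · rw [cP, dP_neg (by omega : (N:ℤ) + n < 0)]; ring
  · rw [cP, dP_neg (by omega : (N:ℤ) - n < 0)]; ring

lemma cP_diag {Q : ℂ} (hQ : ‖Q‖ < 1) (N : ℕ) : cP Q N N = 1 := by
  rw [cP, show ((N:ℤ) - N) = ((0:ℕ):ℤ) by push_cast; ring,
    show ((N:ℤ) + N) = ((2*N:ℕ):ℤ) by push_cast; ring, dP_natCast, dP_natCast]
  rw [show bP Q 0 = 1 from Finset.prod_range_zero _]
  field_simp [bP_ne_zero hQ (2*N)]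

lemma cP_diag' {Q : ℂ} (hQ : ‖Q‖ < 1) (N : ℕ) : cP Q N (-(N:ℤ)) = 1 := by
  rw [cP, show ((N:ℤ) - (-(N:ℤ))) = ((2*N:ℕ):ℤ) by push_cast; ring,
    show ((N:ℤ) + (-(N:ℤ))) = ((0:ℕ):ℤ) by push_cast; ring, dP_natCast, dP_natCast]
  rw [show bP Q 0 = 1 from Finset.prod_range_zero _]
  field_simp [bP_ne_zero hQ (2*N)]

lemma cP_rec {Q : ℂ} (hQ0 : Q ≠ 0) (hQ : ‖Q‖ < 1) (N : ℕ) (n : ℤ) :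
    cP Q (N+1) n = cP Q N n * (1 + Q ^ (2*(N:ℤ)+1))
      + Q ^ ((N:ℤ)+1-n) * cP Q N (n-1) + Q ^ ((N:ℤ)+1+n) * cP Q N (n+1) := by
  have castA : ((N+1:ℕ):ℤ) - n = (N:ℤ)+1-n := by push_cast; ring
  have castB : ((N+1:ℕ):ℤ) + n = (N:ℤ)+1+n := by push_cast; ring
  by_cases hD : (N:ℤ)+1 < n
  · rw [cP, cP, cP, cP, castA,
      dP_neg (by omega : (N:ℤ)+1-n < 0),
      dP_neg (by omega : (N:ℤ) - n < 0),
      dP_neg (by omega : (N:ℤ) - (n-1) < 0),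
      dP_neg (by omega : (N:ℤ) - (n+1) < 0)]
    ring
  by_cases hE : n < -((N:ℤ)+1)
  · rw [cP, cP, cP, cP, castB,
      dP_neg (by omega : (N:ℤ)+1+n < 0),
      dP_neg (by omega : (N:ℤ) + n < 0),
      dP_neg (by omega : (N:ℤ) + (n-1) < 0),
      dP_neg (by omega : (N:ℤ) + (n+1) < 0)]
    ring
  by_cases hB : n = (N:ℤ)+1
  · subst hB
    rw [show ((N:ℤ)+1-1) = ((N:ℕ):ℤ) by push_cast; ring]
    rw [show cP Q (N+1) ((N:ℤ)+1) = cP Q (N+1) (((N+1:ℕ)):ℤ) by push_cast; ring_nf]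
    rw [cP_diag hQ, cP_diag hQ, cP, cP,
      dP_neg (by omega : (N:ℤ) - ((N:ℤ)+1) < 0),
      dP_neg (by omega : (N:ℤ) - ((N:ℤ)+1+1) < 0),
      show (N:ℤ)+1-((N:ℤ)+1) = 0 by ring, zpow_zero]
    ring
  by_cases hC : n = -((N:ℤ)+1)
  · subst hC
    rw [show (-(((N:ℤ))+1)+1) = -((N:ℕ):ℤ) by push_cast; ring]
    rw [show cP Q (N+1) (-((N:ℤ)+1)) = cP Q (N+1) (-((N+1:ℕ):ℤ)) by push_cast; ring_nf]
    rw [cP_diag' hQ, cP_diag' hQ, cP, cP,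
      dP_neg (by omega : (N:ℤ) + (-((N:ℤ)+1)) < 0),
      dP_neg (by omega : (N:ℤ) + (-((N:ℤ)+1)-1) < 0),
      show (N:ℤ)+1+(-((N:ℤ)+1)) = 0 by ring, zpow_zero]
    ring
  -- main case
  have hα : (0:ℤ) ≤ (N:ℤ) - n := by omega
  have hβ : (0:ℤ) ≤ (N:ℤ) + n := by omega
  rw [cP, cP, cP, cP, castA, castB]
  -- normalize dP arguments
  rw [show (N:ℤ) - (n-1) = (N:ℤ)+1-n by ring, show (N:ℤ) + (n+1) = (N:ℤ)+1+n by ring,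
    show (N:ℤ) - (n+1) = (N:ℤ)-n-1 by ring, show (N:ℤ) + (n-1) = (N:ℤ)+n-1 by ring]
  have f3 : dP Q ((N:ℤ)-n-1) = (1 - Q ^ ((N:ℤ)-n)) * dP Q ((N:ℤ)-n) := by
    rw [dP_step hQ (by omega : (-1:ℤ) ≤ (N:ℤ)-n-1), show (N:ℤ)-n-1+1 = (N:ℤ)-n by ring]
  have f4 : dP Q ((N:ℤ)+n-1) = (1 - Q ^ ((N:ℤ)+n)) * dP Q ((N:ℤ)+n) := by
    rw [dP_step hQ (by omega : (-1:ℤ) ≤ (N:ℤ)+n-1), show (N:ℤ)+n-1+1 = (N:ℤ)+n by ring]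
  have f1 : dP Q ((N:ℤ)-n) = (1 - Q * Q ^ ((N:ℤ)-n)) * dP Q ((N:ℤ)+1-n) := by
    rw [dP_step hQ (by omega : (-1:ℤ) ≤ (N:ℤ)-n),
      show (N:ℤ)-n+1 = 1+((N:ℤ)-n) by ring, zpow_add₀ hQ0, zpow_one,
      show (1:ℤ)+((N:ℤ)-n) = (N:ℤ)+1-n by ring]
  have f2 : dP Q ((N:ℤ)+n) = (1 - Q * Q ^ ((N:ℤ)+n)) * dP Q ((N:ℤ)+1+n) := by
    rw [dP_step hQ (by omega : (-1:ℤ) ≤ (N:ℤ)+n),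
      show (N:ℤ)+n+1 = 1+((N:ℤ)+n) by ring, zpow_add₀ hQ0, zpow_one,
      show (1:ℤ)+((N:ℤ)+n) = (N:ℤ)+1+n by ring]
  have f5 : bP Q (2*(N+1)) = bP Q (2*N)
      * ((1 - Q * (Q ^ ((N:ℤ)-n) * Q ^ ((N:ℤ)+n)))
        * (1 - Q * (Q * (Q ^ ((N:ℤ)-n) * Q ^ ((N:ℤ)+n))))) := by
    rw [show 2*(N+1) = (2*N+1)+1 by ring, bP_succ, bP_succ]
    have g1 : (Q:ℂ) ^ (2*N+1) = Q * (Q ^ ((N:ℤ)-n) * Q ^ ((N:ℤ)+n)) := by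
      rw [← zpow_natCast Q (2*N+1), ← zpow_add₀ hQ0, ← zpow_one_add₀ hQ0]
      congr 1; push_cast; ring
    have g2 : (Q:ℂ) ^ (2*N+1+1) = Q * (Q * (Q ^ ((N:ℤ)-n) * Q ^ ((N:ℤ)+n))) := by
      rw [← zpow_natCast Q (2*N+1+1), ← zpow_add₀ hQ0, ← zpow_one_add₀ hQ0,
        ← zpow_one_add₀ hQ0]
      congr 1; push_cast; ring
    rw [g1, g2]; ring
  have h1 : Q ^ (2*(N:ℤ)+1) = Q * (Q ^ ((N:ℤ)-n) * Q ^ ((N:ℤ)+n)) := by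
    rw [← zpow_add₀ hQ0, ← zpow_one_add₀ hQ0]; congr 1; ring
  have h2 : Q ^ ((N:ℤ)+1-n) = Q * Q ^ ((N:ℤ)-n) := by
    rw [← zpow_one_add₀ hQ0]; congr 1; ring
  have h3 : Q ^ ((N:ℤ)+1+n) = Q * Q ^ ((N:ℤ)+n) := by
    rw [← zpow_one_add₀ hQ0]; congr 1; ring
  rw [f5, f3, f4, f1, f2, h1, h2, h3]
  ring

lemma finJTP {q t : ℂ} (hq0 : q ≠ 0) (hq : ‖q‖ < 1) (ht : t ≠ 0) (N : ℕ) :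
    ∏ j ∈ Finset.range N, ((1 + q * t * (q^2)^j) * (1 + q * t⁻¹ * (q^2)^j))
      = ∑' n : ℤ, cP (q^2) N n * (q ^ (n^2) * t ^ n) := by
  have hq20 : (q^2 : ℂ) ≠ 0 := pow_ne_zero 2 hq0
  have hq2 : ‖(q^2 : ℂ)‖ < 1 := by
    rw [norm_pow]
    nlinarith [norm_nonneg q]
  induction N with
  | zero =>
    rw [Finset.prod_range_zero, tsum_eq_single 0 ?_]
    · rw [show ((0:ℤ)^2) = 0 by ring, zpow_zero, zpow_zero,
        show ((0:ℤ)) = ((0:ℕ):ℤ) by norm_num, cP_diag hq2 0]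
      ring
    · intro n hn
      rw [cP_zero_outside 0 n (by simp only [Finset.mem_Icc]; omega)]
      ring
  | succ N IH =>
    rw [Finset.prod_range_succ, IH]
    have hA : q * (q^2)^N = q^(2*(N:ℤ)+1) := by
      rw [show (2*(N:ℤ)+1) = ((2*N+1:ℕ):ℤ) by push_cast; ring, zpow_natCast]
      ring
    have hexp : (1 + q*t*(q^2)^N) * (1 + q*t⁻¹*(q^2)^N)
        = (1 + q^(2*(N:ℤ)+1)*q^(2*(N:ℤ)+1)) + (q^(2*(N:ℤ)+1)*t + q^(2*(N:ℤ)+1)*t⁻¹) := by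
      rw [← hA]
      field_simp
      ring
    rw [hexp]
    set A := q^(2*(N:ℤ)+1) with hAdef
    set w1 : ℤ → ℂ := fun n => cP (q^2) N n * (q ^ (n^2) * t ^ n) * (1 + A*A) with hw1
    set w2 : ℤ → ℂ := fun n => cP (q^2) N n * (q ^ (n^2) * t ^ (n+1)) * A with hw2
    set w3 : ℤ → ℂ := fun n => cP (q^2) N n * (q ^ (n^2) * t ^ (n-1)) * A with hw3
    set w2' : ℤ → ℂ := fun n => cP (q^2) N (n-1) * (q ^ ((n-1)^2) * t ^ n) * A with hw2'
    set w3' : ℤ → ℂ := fun n => cP (q^2) N (n+1) * (q ^ ((n+1)^2) * t ^ n) * A with hw3'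
    have Sw1 : Summable w1 := by
      apply summable_of_ne_finset_zero (s := Finset.Icc (-(N:ℤ)) N)
      intro b hb
      have h0 := cP_zero_outside (Q:=q^2) N b hb
      simp [hw1, h0]
    have Sw2 : Summable w2 := by
      apply summable_of_ne_finset_zero (s := Finset.Icc (-(N:ℤ)) N)
      intro b hb
      have h0 := cP_zero_outside (Q:=q^2) N b hb
      simp [hw2, h0]
    have Sw3 : Summable w3 := by
      apply summable_of_ne_finset_zero (s := Finset.Icc (-(N:ℤ)) N)
      intro b hb
      have h0 := cP_zero_outside (Q:=q^2) N b hb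
      simp [hw3, h0]
    have Sw2' : Summable w2' := by
      apply summable_of_ne_finset_zero (s := Finset.Icc (-(N:ℤ)-1) ((N:ℤ)+1))
      intro b hb
      have h0 := cP_zero_outside (Q:=q^2) N (b-1) (by simp only [Finset.mem_Icc] at *; omega)
      simp [hw2', h0]
    have Sw3' : Summable w3' := by
      apply summable_of_ne_finset_zero (s := Finset.Icc (-(N:ℤ)-1) ((N:ℤ)+1))
      intro b hb
      have h0 := cP_zero_outside (Q:=q^2) N (b+1) (by simp only [Finset.mem_Icc] at *; omega)
      simp [hw3', h0]
    have split : (∑' n : ℤ, cP (q^2) N n * (q ^ (n^2) * t ^ n))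
        * ((1 + A*A) + (A*t + A*t⁻¹)) = (∑' n, w1 n) + ((∑' n, w2 n) + (∑' n, w3 n)) := by
      rw [← Summable.tsum_add Sw2 Sw3, ← Summable.tsum_add Sw1 (Sw2.add Sw3), ← tsum_mul_right]
      apply tsum_congr
      intro n
      rw [hw1, hw2, hw3]
      simp only
      rw [zpow_add_one₀ ht, zpow_sub_one₀ ht]
      ring
    rw [split]
    have e2 : (∑' n, w2 n) = ∑' n, w2' n := by
      rw [← Equiv.tsum_eq (Equiv.addRight (1:ℤ)) w2']
      apply tsum_congr
      intro n
      rw [hw2, hw2']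
      simp only [Equiv.coe_addRight, add_sub_cancel_right]

    have e3 : (∑' n, w3 n) = ∑' n, w3' n := by
      rw [← Equiv.tsum_eq (Equiv.subRight (1:ℤ)) w3']
      apply tsum_congr
      intro n
      rw [hw3, hw3']
      simp only [Equiv.subRight_apply]
      rw [show n - 1 + 1 = n by ring]
    rw [e2, e3, ← Summable.tsum_add Sw2' Sw3', ← Summable.tsum_add Sw1 (Sw2'.add Sw3')]
    apply tsum_congr
    intro n
    rw [hw1, hw2', hw3']
    simp only
    rw [cP_rec hq20 hq2 N n]
    have hQz : ∀ m : ℤ, ((q^2:ℂ))^m = q^(2*m) := by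
      intro m
      rw [show ((q^2:ℂ)) = q^((2:ℕ):ℤ) by rw [zpow_natCast], ← zpow_mul]
      norm_num
    have i1 : (q^2:ℂ)^(2*(N:ℤ)+1) = A * A := by
      rw [hQz, hAdef, ← zpow_add₀ hq0]
      congr 1
      ring
    have i2 : (q^2:ℂ)^((N:ℤ)+1-n) * q^(n^2) = q^((n-1)^2) * A := by
      rw [hQz, hAdef, ← zpow_add₀ hq0, ← zpow_add₀ hq0]
      congr 1
      ring
    have i3 : (q^2:ℂ)^((N:ℤ)+1+n) * q^(n^2) = q^((n+1)^2) * A := by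
      rw [hQz, hAdef, ← zpow_add₀ hq0, ← zpow_add₀ hq0]
      congr 1
      ring
    linear_combination (-(cP (q^2) N n * q^(n^2) * t^n)) * i1
      - (cP (q^2) N (n-1) * t^n) * i2 - (cP (q^2) N (n+1) * t^n) * i3

lemma norm_seq_bounds {f : ℕ → ℂ} {L : ℂ} (hf : Tendsto f atTop (𝓝 L))
    (hne : ∀ M, f M ≠ 0) (hL : L ≠ 0) :
    ∃ c C : ℝ, 0 < c ∧ ∀ M, c ≤ ‖f M‖ ∧ ‖f M‖ ≤ C := by
  have hn : Tendsto (fun M => ‖f M‖) atTop (𝓝 ‖L‖) := hf.norm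
  have hLpos : 0 < ‖L‖ := norm_pos_iff.mpr hL
  have h1 : ∀ᶠ M in atTop, ‖L‖/2 ≤ ‖f M‖ := hn.eventually_const_le (by linarith)
  have h2 : ∀ᶠ M in atTop, ‖f M‖ ≤ ‖L‖+1 := hn.eventually_le_const (by linarith)
  obtain ⟨M₀, hM₀⟩ := (h1.and h2).exists_forall_of_atTop
  have hne' : (Finset.range (M₀+1)).Nonempty := ⟨0, by simp⟩
  refine ⟨min (‖L‖/2) ((Finset.range (M₀+1)).inf' hne' (fun M => ‖f M‖)),
          max (‖L‖+1) ((Finset.range (M₀+1)).sup' hne' (fun M => ‖f M‖)), ?_, ?_⟩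
  · apply lt_min (by linarith)
    rw [Finset.lt_inf'_iff]
    intro i _
    exact norm_pos_iff.mpr (hne i)
  · intro M
    by_cases hM : M₀ ≤ M
    · exact ⟨le_trans (min_le_left _ _) (hM₀ M hM).1,
        le_trans (hM₀ M hM).2 (le_max_left _ _)⟩
    · have hmem : M ∈ Finset.range (M₀+1) := by simp; omega
      exact ⟨le_trans (min_le_right _ _) (Finset.inf'_le _ hmem),
        le_trans (Finset.le_sup' (fun M => ‖f M‖) hmem) (le_max_right _ _)⟩

lemma bP_tendsto {Q : ℂ} (hQ : ‖Q‖ < 1) :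
    Tendsto (bP Q) atTop (𝓝 (qPoch Q Q)) := by
  apply (tendsto_partial Q hQ).congr
  intro N
  apply Finset.prod_congr rfl
  intro j _
  rw [pow_succ']

lemma P_ne_zero {Q : ℂ} (hQ : ‖Q‖ < 1) : qPoch Q Q ≠ 0 := by
  apply qPoch_ne_zero hQ
  intro k
  rw [← pow_succ']
  apply factor_ne_zero
  rw [norm_pow]
  exact pow_lt_one₀ (norm_nonneg Q) hQ (by omega)

lemma cP_tendsto {Q : ℂ} (hQ : ‖Q‖ < 1) (n : ℤ) :
    Tendsto (fun N => cP Q N n) atTop (𝓝 (qPoch Q Q)⁻¹) := by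
  set P := qPoch Q Q with hP
  have hP0 : P ≠ 0 := P_ne_zero hQ
  have l1 : Tendsto (fun N => bP Q (2*N)) atTop (𝓝 P) :=
    (bP_tendsto hQ).comp (tendsto_atTop_mono (fun n => by simp only [id_eq]; omega) tendsto_id)
  have l2 : Tendsto (fun N : ℕ => bP Q ((N:ℤ) - n).toNat) atTop (𝓝 P) := by
    apply (bP_tendsto hQ).comp
    apply tendsto_atTop_atTop.mpr
    intro b
    exact ⟨b + n.natAbs, fun a ha => by omega⟩
  have l3 : Tendsto (fun N : ℕ => bP Q ((N:ℤ) + n).toNat) atTop (𝓝 P) := by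
    apply (bP_tendsto hQ).comp
    apply tendsto_atTop_atTop.mpr
    intro b
    exact ⟨b + n.natAbs, fun a ha => by omega⟩
  have comb := l1.mul ((l2.inv₀ hP0).mul (l3.inv₀ hP0))
  rw [show P * (P⁻¹ * P⁻¹) = P⁻¹ by field_simp] at comb
  apply comb.congr'
  filter_upwards [eventually_ge_atTop n.natAbs] with N hN
  rw [cP, dP, dP, if_pos (by omega : (0:ℤ) ≤ (N:ℤ) - n), if_pos (by omega : (0:ℤ) ≤ (N:ℤ) + n)]

lemma cP_norm_bound {Q : ℂ} (hQ : ‖Q‖ < 1) :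
    ∃ K : ℝ, ∀ (N : ℕ) (n : ℤ), ‖cP Q N n‖ ≤ K := by
  obtain ⟨c, C, hc, hbd⟩ := norm_seq_bounds (bP_tendsto hQ) (bP_ne_zero hQ) (P_ne_zero hQ)
  have hdP : ∀ m : ℤ, ‖dP Q m‖ ≤ c⁻¹ := by
    intro m
    rw [dP]
    split_ifs with h
    · rw [norm_inv]
      exact inv_anti₀ hc (hbd _).1
    · simp
      positivity
  refine ⟨C * (c⁻¹ * c⁻¹), fun N n => ?_⟩
  have h1 : (0:ℝ) ≤ C := le_trans (norm_nonneg _) (hbd 0).2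
  calc ‖cP Q N n‖ = ‖bP Q (2*N)‖ * (‖dP Q ((N:ℤ)-n)‖ * ‖dP Q ((N:ℤ)+n)‖) := by
        rw [cP, norm_mul, norm_mul]
    _ ≤ C * (c⁻¹ * c⁻¹) := by
        apply mul_le_mul (hbd _).2 _ (by positivity) h1
        apply mul_le_mul (hdP _) (hdP _) (norm_nonneg _) (by positivity)

lemma JTP {q t : ℂ} (hq0 : q ≠ 0) (hq : ‖q‖ < 1) (ht : t ≠ 0) :
    qPoch (q^2) (q^2) * theta (-(q*t)) (q^2) = ∑' n : ℤ, q ^ (n^2) * t ^ n := by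
  have hq20 : (q^2 : ℂ) ≠ 0 := pow_ne_zero 2 hq0
  have hq2 : ‖(q^2 : ℂ)‖ < 1 := by
    rw [norm_pow]
    nlinarith [norm_nonneg q]
  set P := qPoch (q^2) (q^2) with hPdef
  have hP0 : P ≠ 0 := P_ne_zero hq2
  -- limit of partial products
  have limF : Tendsto (fun N => ∏ j ∈ Finset.range N,
      ((1 + q * t * (q^2)^j) * (1 + q * t⁻¹ * (q^2)^j))) atTop (𝓝 (theta (-(q*t)) (q^2))) := by
    have harg : (q^2) / -(q*t) = -(q * t⁻¹) := by
      field_simp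
    rw [theta, harg]
    apply ((tendsto_partial (-(q*t)) hq2).mul (tendsto_partial (-(q*t⁻¹)) hq2)).congr
    intro N
    rw [← Finset.prod_mul_distrib]
    apply Finset.prod_congr rfl
    intro j _
    ring
  -- limit of sums
  obtain ⟨K, hK⟩ := cP_norm_bound (Q := q^2) hq2
  have limS : Tendsto (fun N => ∑' n : ℤ, cP (q^2) N n * (q ^ (n^2) * t ^ n)) atTop
      (𝓝 (∑' n : ℤ, P⁻¹ * (q ^ (n^2) * t ^ n))) := by
    apply tendsto_tsum_of_dominated_convergence
      (bound := fun n : ℤ => K * ‖q ^ (n^2) * t ^ n‖)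
      ((summable_norm_zint hq0 hq ht).mul_left K)
    · intro n
      exact (cP_tendsto hq2 n).mul_const _
    · apply Eventually.of_forall
      intro N n
      rw [norm_mul]
      exact mul_le_mul_of_nonneg_right (hK N n) (norm_nonneg _)
  have lim2 : Tendsto (fun N => ∑' n : ℤ, cP (q^2) N n * (q ^ (n^2) * t ^ n)) atTop
      (𝓝 (theta (-(q*t)) (q^2))) := by
    apply limF.congr
    intro N
    exact finJTP hq0 hq ht N
  have key : theta (-(q*t)) (q^2) = P⁻¹ * ∑' n : ℤ, q ^ (n^2) * t ^ n := by
    rw [← tsum_mul_left]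
    exact tendsto_nhds_unique lim2 limS
  rw [key]
  field_simp

def sig (v : ((ℤ×ℤ)×ℤ)×ℤ) : ℤ := v.1.1.1 + v.1.1.2 + v.1.2 + v.2

def flipEven : (((ℤ×ℤ)×ℤ)×ℤ) → (((ℤ×ℤ)×ℤ)×ℤ) := fun v =>
  if Even (sig v) then
    (((sig v / 2 - v.1.1.1, sig v / 2 - v.1.1.2), sig v / 2 - v.1.2), sig v / 2 - v.2)
  else v

lemma flipEven_invol : Function.Involutive flipEven := by
  rintro ⟨⟨⟨a,b⟩,c⟩,d⟩
  by_cases h1 : Even (a+b+c+d)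
  · have h2 : Even (((a+b+c+d)/2 - a) + ((a+b+c+d)/2 - b) + ((a+b+c+d)/2 - c)
        + ((a+b+c+d)/2 - d)) := by
      rw [Int.even_iff] at *; omega
    simp only [flipEven, sig, h1, h2, ↓reduceIte, Prod.mk.injEq]
    simp only [Int.even_iff] at h1
    omega
  · simp only [flipEven, sig, h1, ↓reduceIte]

noncomputable def evenPerm : Equiv.Perm ((((ℤ×ℤ)×ℤ)×ℤ)) := flipEven_invol.toPerm

lemma evenPerm_apply (v : ((ℤ×ℤ)×ℤ)×ℤ) : evenPerm v = flipEven v := rfl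

def oddFwd : (((ℤ×ℤ)×ℤ)×ℤ) → (((ℤ×ℤ)×ℤ)×ℤ) := fun v =>
  if Even (sig v) then v
  else ((((sig v + 1) / 2 - v.1.1.1, (sig v + 1) / 2 - v.1.1.2),
        (sig v + 1) / 2 - v.1.2), (sig v + 1) / 2 - v.2)

def oddBwd : (((ℤ×ℤ)×ℤ)×ℤ) → (((ℤ×ℤ)×ℤ)×ℤ) := fun v =>
  if Even (sig v) then v
  else ((((sig v - 1) / 2 - v.1.1.1, (sig v - 1) / 2 - v.1.1.2),
        (sig v - 1) / 2 - v.1.2), (sig v - 1) / 2 - v.2)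

noncomputable def oddPerm : Equiv.Perm ((((ℤ×ℤ)×ℤ)×ℤ)) where
  toFun := oddFwd
  invFun := oddBwd
  left_inv := by
      rintro ⟨⟨⟨a,b⟩,c⟩,d⟩
      by_cases h1 : Even (a+b+c+d)
      · simp only [oddFwd, oddBwd, sig, h1, ↓reduceIte]
      · have h2 : ¬ Even (((a+b+c+d+1)/2 - a) + ((a+b+c+d+1)/2 - b) + ((a+b+c+d+1)/2 - c)
            + ((a+b+c+d+1)/2 - d)) := by
          rw [Int.even_iff] at *; omega
        simp only [oddFwd, oddBwd, sig, h1, h2, ↓reduceIte, Prod.mk.injEq]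
        simp only [Int.even_iff] at h1
        omega
  right_inv := by
      rintro ⟨⟨⟨a,b⟩,c⟩,d⟩
      by_cases h1 : Even (a+b+c+d)
      · simp only [oddFwd, oddBwd, sig, h1, ↓reduceIte]
      · have h2 : ¬ Even (((a+b+c+d-1)/2 - a) + ((a+b+c+d-1)/2 - b) + ((a+b+c+d-1)/2 - c)
            + ((a+b+c+d-1)/2 - d)) := by
          rw [Int.even_iff] at *; omega
        simp only [oddFwd, oddBwd, sig, h1, h2, ↓reduceIte, Prod.mk.injEq]
        simp only [Int.even_iff] at h1
        omega

lemma oddPerm_apply (v : ((ℤ×ℤ)×ℤ)×ℤ) : oddPerm v = oddFwd v := rfl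

lemma T4 {q a b c d : ℂ} (hq0 : q ≠ 0) (hq : ‖q‖ < 1)
    (ha : a ≠ 0) (hb : b ≠ 0) (hc : c ≠ 0) (hd : d ≠ 0) :
    (∑' n : ℤ, q ^ (n^2) * a ^ n) * (∑' n : ℤ, q ^ (n^2) * b ^ n)
      * (∑' n : ℤ, q ^ (n^2) * c ^ n) * (∑' n : ℤ, q ^ (n^2) * d ^ n)
    = ∑' v : ((ℤ×ℤ)×ℤ)×ℤ,
        q ^ (v.1.1.1^2 + v.1.1.2^2 + v.1.2^2 + v.2^2)
          * (a ^ v.1.1.1 * b ^ v.1.1.2 * c ^ v.1.2 * d ^ v.2) := by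
  have Sa := summable_norm_zint hq0 hq ha
  have Sb := summable_norm_zint hq0 hq hb
  have Sc := summable_norm_zint hq0 hq hc
  have Sd := summable_norm_zint hq0 hq hd
  have s2 := Sa.mul_norm Sb
  have s3 := s2.mul_norm Sc
  rw [tsum_mul_tsum_of_summable_norm Sa Sb, tsum_mul_tsum_of_summable_norm s2 Sc,
    tsum_mul_tsum_of_summable_norm s3 Sd]
  apply tsum_congr
  intro v
  rw [zpow_add₀ hq0, zpow_add₀ hq0, zpow_add₀ hq0]
  ring

lemma T4_summable {q a b c d : ℂ} (hq0 : q ≠ 0) (hq : ‖q‖ < 1)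
    (ha : a ≠ 0) (hb : b ≠ 0) (hc : c ≠ 0) (hd : d ≠ 0) :
    Summable fun v : ((ℤ×ℤ)×ℤ)×ℤ =>
        ‖q ^ (v.1.1.1^2 + v.1.1.2^2 + v.1.2^2 + v.2^2)
          * (a ^ v.1.1.1 * b ^ v.1.1.2 * c ^ v.1.2 * d ^ v.2)‖ := by
  have Sa := summable_norm_zint hq0 hq ha
  have Sb := summable_norm_zint hq0 hq hb
  have Sc := summable_norm_zint hq0 hq hc
  have Sd := summable_norm_zint hq0 hq hd
  have s4 := ((Sa.mul_norm Sb).mul_norm Sc).mul_norm Sd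
  apply s4.congr
  intro v
  congr 1
  rw [zpow_add₀ hq0, zpow_add₀ hq0, zpow_add₀ hq0]
  ring

noncomputable def mono (w x y z : ℂ) (A B C D : ℤ) : ℂ := w^A * x^B * y^C * z^D

lemma mono_mul {w x y z : ℂ} (hw : w ≠ 0) (hx : x ≠ 0) (hy : y ≠ 0) (hz : z ≠ 0)
    (A B C D A' B' C' D' : ℤ) :
    mono w x y z A B C D * mono w x y z A' B' C' D'
      = mono w x y z (A+A') (B+B') (C+C') (D+D') := by
  simp only [mono, zpow_add₀ hw, zpow_add₀ hx, zpow_add₀ hy, zpow_add₀ hz]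
  ring

lemma mono_congr {w x y z : ℂ} {A B C D A' B' C' D' : ℤ}
    (h1 : A = A') (h2 : B = B') (h3 : C = C') (h4 : D = D') :
    mono w x y z A B C D = mono w x y z A' B' C' D' := by
  rw [h1, h2, h3, h4]

lemma U1_pow {w x y z : ℂ} (hw : w ≠ 0) (n : ℤ) :
    (x * y * z / w) ^ n = mono w x y z (-n) n n n := by
  rw [mono, div_zpow, mul_zpow, mul_zpow, zpow_neg]
  field_simp

lemma U2_pow {w x y z : ℂ} (hx : x ≠ 0) (n : ℤ) :
    (w * y * z / x) ^ n = mono w x y z n (-n) n n := by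
  rw [mono, div_zpow, mul_zpow, mul_zpow, zpow_neg]
  field_simp

lemma U3_pow {w x y z : ℂ} (hy : y ≠ 0) (n : ℤ) :
    (w * x * z / y) ^ n = mono w x y z n n (-n) n := by
  rw [mono, div_zpow, mul_zpow, mul_zpow, zpow_neg]
  field_simp

lemma U4_pow {w x y z : ℂ} (hz : z ≠ 0) (n : ℤ) :
    (w * x * y / z) ^ n = mono w x y z n n n (-n) := by
  rw [mono, div_zpow, mul_zpow, mul_zpow, zpow_neg]
  field_simp

lemma sq_powW {w x y z : ℂ} (n : ℤ) : ((w^2 : ℂ)) ^ n = mono w x y z (2*n) 0 0 0 := by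
  simp only [mono, zpow_zero, mul_one]
  rw [show (w^2:ℂ) = w^((2:ℕ):ℤ) by rw [zpow_natCast], ← zpow_mul]
  norm_num

lemma sq_powX {w x y z : ℂ} (n : ℤ) : ((x^2 : ℂ)) ^ n = mono w x y z 0 (2*n) 0 0 := by
  simp only [mono, zpow_zero, mul_one, one_mul]
  rw [show (x^2:ℂ) = x^((2:ℕ):ℤ) by rw [zpow_natCast], ← zpow_mul]
  norm_num

lemma sq_powY {w x y z : ℂ} (n : ℤ) : ((y^2 : ℂ)) ^ n = mono w x y z 0 0 (2*n) 0 := by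
  simp only [mono, zpow_zero, mul_one, one_mul]
  rw [show (y^2:ℂ) = y^((2:ℕ):ℤ) by rw [zpow_natCast], ← zpow_mul]
  norm_num

lemma sq_powZ {w x y z : ℂ} (n : ℤ) : ((z^2 : ℂ)) ^ n = mono w x y z 0 0 0 (2*n) := by
  simp only [mono, zpow_zero, mul_one, one_mul]
  rw [show (z^2:ℂ) = z^((2:ℕ):ℤ) by rw [zpow_natCast], ← zpow_mul]
  norm_num

lemma neg_base_pow (u : ℂ) (n : ℤ) : (-u) ^ n = (-1) ^ n * u ^ n := by
  rw [show -u = (-1) * u by ring, mul_zpow]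

lemma mul_base_pow (q u : ℂ) (n : ℤ) : (q * u) ^ n = q ^ n * u ^ n := mul_zpow q u n

noncomputable def gFun (q a b c d : ℂ) (v : ((ℤ×ℤ)×ℤ)×ℤ) : ℂ :=
  q ^ (v.1.1.1^2 + v.1.1.2^2 + v.1.2^2 + v.2^2)
    * (a ^ v.1.1.1 * b ^ v.1.1.2 * c ^ v.1.2 * d ^ v.2)

lemma T4' {q a b c d : ℂ} (hq0 : q ≠ 0) (hq : ‖q‖ < 1)
    (ha : a ≠ 0) (hb : b ≠ 0) (hc : c ≠ 0) (hd : d ≠ 0) :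
    (∑' n : ℤ, q ^ (n^2) * a ^ n) * (∑' n : ℤ, q ^ (n^2) * b ^ n)
      * (∑' n : ℤ, q ^ (n^2) * c ^ n) * (∑' n : ℤ, q ^ (n^2) * d ^ n)
    = ∑' v : ((ℤ×ℤ)×ℤ)×ℤ, gFun q a b c d v := T4 hq0 hq ha hb hc hd

lemma T4s {q a b c d : ℂ} (hq0 : q ≠ 0) (hq : ‖q‖ < 1)
    (ha : a ≠ 0) (hb : b ≠ 0) (hc : c ≠ 0) (hd : d ≠ 0) :
    Summable fun v : ((ℤ×ℤ)×ℤ)×ℤ => ‖gFun q a b c d v‖ :=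
  T4_summable hq0 hq ha hb hc hd

section relations

variable {q w x y z : ℂ} (hq0 : q ≠ 0) (hw : w ≠ 0) (hx : x ≠ 0) (hy : y ≠ 0) (hz : z ≠ 0)

include hq0 hw hx hy hz

lemma KeyE (a b c d k : ℤ) (h : a + b + c + d = 2*k) :
    q ^ (a^2+b^2+c^2+d^2)
      * ((x*y*z/w)^a * (w*y*z/x)^b * (w*x*z/y)^c * (w*x*y/z)^d)
    = q ^ ((k-a)^2+(k-b)^2+(k-c)^2+(k-d)^2)
      * ((w^2:ℂ)^(k-a) * (x^2:ℂ)^(k-b) * (y^2:ℂ)^(k-c) * (z^2:ℂ)^(k-d)) := by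
  rw [U1_pow hw, U2_pow hx, U3_pow hy, U4_pow hz,
    mono_mul hw hx hy hz, mono_mul hw hx hy hz, mono_mul hw hx hy hz,
    sq_powW (x := x) (y := y) (z := z), sq_powX (w := w) (y := y) (z := z),
    sq_powY (w := w) (x := x) (z := z), sq_powZ (w := w) (x := x) (y := y),
    mono_mul hw hx hy hz, mono_mul hw hx hy hz, mono_mul hw hx hy hz]
  congr 1
  · congr 1
    linear_combination (2*k) * h
  · apply mono_congr <;> omega

lemma KeyO (a b c d k : ℤ) (h : a + b + c + d = 2*k+1) :
    (q*w*x*y*z) * (q ^ (a+b+c+d) * (q ^ (a^2+b^2+c^2+d^2)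
      * ((x*y*z/w)^a * (w*y*z/x)^b * (w*x*z/y)^c * (w*x*y/z)^d)))
    = q ^ ((k+1-a)^2+(k+1-b)^2+(k+1-c)^2+(k+1-d)^2)
      * ((w^2:ℂ)^(k+1-a) * (x^2:ℂ)^(k+1-b) * (y^2:ℂ)^(k+1-c) * (z^2:ℂ)^(k+1-d)) := by
  rw [U1_pow hw, U2_pow hx, U3_pow hy, U4_pow hz,
    mono_mul hw hx hy hz, mono_mul hw hx hy hz, mono_mul hw hx hy hz]
  rw [show (q*w*x*y*z) * (q ^ (a+b+c+d) * (q ^ (a^2+b^2+c^2+d^2)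
      * mono w x y z (-a+b+c+d) (a+-b+c+d) (a+b+-c+d) (a+b+c+-d)))
    = (q^(1:ℤ) * q^(a+b+c+d) * q^(a^2+b^2+c^2+d^2))
      * (mono w x y z 1 1 1 1 * mono w x y z (-a+b+c+d) (a+-b+c+d) (a+b+-c+d) (a+b+c+-d)) from by
        simp only [mono, zpow_one]
        ring]
  rw [mono_mul hw hx hy hz, ← zpow_add₀ hq0, ← zpow_add₀ hq0,
    sq_powW (x := x) (y := y) (z := z), sq_powX (w := w) (y := y) (z := z),
    sq_powY (w := w) (x := x) (z := z), sq_powZ (w := w) (x := x) (y := y),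
    mono_mul hw hx hy hz, mono_mul hw hx hy hz, mono_mul hw hx hy hz]
  congr 1
  · congr 1
    linear_combination (2*k+3) * h
  · apply mono_congr <;> omega

lemma g4_eq (v : ((ℤ×ℤ)×ℤ)×ℤ) :
    gFun q (-(x*y*z/w)) (-(w*y*z/x)) (-(w*x*z/y)) (-(w*x*y/z)) v
      = (-1)^(sig v) * gFun q (x*y*z/w) (w*y*z/x) (w*x*z/y) (w*x*y/z) v := by
  obtain ⟨⟨⟨a,b⟩,c⟩,d⟩ := v
  simp only [gFun, sig]
  rw [neg_base_pow (x*y*z/w) a, neg_base_pow (w*y*z/x) b, neg_base_pow (w*x*z/y) c,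
    neg_base_pow (w*x*y/z) d,
    show ((-1:ℂ))^(a+b+c+d) = (-1)^a*(-1)^b*(-1)^c*(-1)^d from by
      rw [zpow_add₀ (by norm_num : (-1:ℂ) ≠ 0) (a+b+c) d,
        zpow_add₀ (by norm_num : (-1:ℂ) ≠ 0) (a+b) c,
        zpow_add₀ (by norm_num : (-1:ℂ) ≠ 0) a b]]
  ring

lemma g2_eq (v : ((ℤ×ℤ)×ℤ)×ℤ) :
    gFun q (q*(x*y*z/w)) (q*(w*y*z/x)) (q*(w*x*z/y)) (q*(w*x*y/z)) v
      = q^(sig v) * gFun q (x*y*z/w) (w*y*z/x) (w*x*z/y) (w*x*y/z) v := by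
  obtain ⟨⟨⟨a,b⟩,c⟩,d⟩ := v
  simp only [gFun, sig]
  rw [mul_base_pow q (x*y*z/w) a, mul_base_pow q (w*y*z/x) b, mul_base_pow q (w*x*z/y) c,
    mul_base_pow q (w*x*y/z) d,
    show (q:ℂ)^(a+b+c+d) = q^a*q^b*q^c*q^d from by
      rw [zpow_add₀ hq0 (a+b+c) d, zpow_add₀ hq0 (a+b) c, zpow_add₀ hq0 a b]]
  ring

lemma g1_eq (v : ((ℤ×ℤ)×ℤ)×ℤ) :
    gFun q (-(q*(x*y*z/w))) (-(q*(w*y*z/x))) (-(q*(w*x*z/y))) (-(q*(w*x*y/z))) v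
      = (-1)^(sig v) * (q^(sig v)
          * gFun q (x*y*z/w) (w*y*z/x) (w*x*z/y) (w*x*y/z) v) := by
  obtain ⟨⟨⟨a,b⟩,c⟩,d⟩ := v
  simp only [gFun, sig]
  rw [neg_base_pow (q*(x*y*z/w)) a, neg_base_pow (q*(w*y*z/x)) b,
    neg_base_pow (q*(w*x*z/y)) c, neg_base_pow (q*(w*x*y/z)) d,
    mul_base_pow q (x*y*z/w) a, mul_base_pow q (w*y*z/x) b, mul_base_pow q (w*x*z/y) c,
    mul_base_pow q (w*x*y/z) d,
    show ((-1:ℂ))^(a+b+c+d) = (-1)^a*(-1)^b*(-1)^c*(-1)^d from by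
      rw [zpow_add₀ (by norm_num : (-1:ℂ) ≠ 0) (a+b+c) d,
        zpow_add₀ (by norm_num : (-1:ℂ) ≠ 0) (a+b) c,
        zpow_add₀ (by norm_num : (-1:ℂ) ≠ 0) a b],
    show (q:ℂ)^(a+b+c+d) = q^a*q^b*q^c*q^d from by
      rw [zpow_add₀ hq0 (a+b+c) d, zpow_add₀ hq0 (a+b) c, zpow_add₀ hq0 a b]]
  ring

lemma even_reindex (v : ((ℤ×ℤ)×ℤ)×ℤ) :
    (if Even (sig v) then 2 * gFun q (x*y*z/w) (w*y*z/x) (w*x*z/y) (w*x*y/z) v else 0)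
    = (if Even (sig (flipEven v)) then 2 * gFun q (w^2) (x^2) (y^2) (z^2) (flipEven v)
        else 0) := by
  obtain ⟨⟨⟨a,b⟩,c⟩,d⟩ := v
  by_cases hp : Even (sig ((((a,b),c),d)))
  · obtain ⟨k, hk⟩ := id hp
    simp only [sig] at hk
    have hdiv : (a+b+c+d)/2 = k := by omega
    have h2 : Even (sig (((((k-a,k-b),k-c),k-d)) : ((ℤ×ℤ)×ℤ)×ℤ)) := by
      simp only [sig]
      rw [Int.even_iff]
      omega
    have hflip : flipEven ((((a,b),c),d)) = (((k-a, k-b), k-c), k-d) := by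
      simp only [flipEven]
      rw [if_pos hp]
      simp only [sig]
      rw [hdiv]
    rw [if_pos hp, hflip, if_pos h2]
    simp only [gFun]
    congr 1
    exact KeyE hq0 hw hx hy hz a b c d k (by omega)
  · have hflip : flipEven ((((a,b),c),d)) = ((((a,b),c),d)) := by
      simp only [flipEven]
      rw [if_neg hp]
    rw [if_neg hp, hflip, if_neg hp]

lemma odd_reindex (v : ((ℤ×ℤ)×ℤ)×ℤ) :
    (if Even (sig v) then 0
      else 2 * ((q*w*x*y*z) * (q^(sig v)
        * gFun q (x*y*z/w) (w*y*z/x) (w*x*z/y) (w*x*y/z) v)))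
    = (if Even (sig (oddFwd v)) then 0
        else 2 * gFun q (w^2) (x^2) (y^2) (z^2) (oddFwd v)) := by
  obtain ⟨⟨⟨a,b⟩,c⟩,d⟩ := v
  by_cases hp : Even (sig ((((a,b),c),d)))
  · have hflip : oddFwd ((((a,b),c),d)) = ((((a,b),c),d)) := by
      simp only [oddFwd]
      rw [if_pos hp]
    rw [if_pos hp, hflip, if_pos hp]
  · obtain ⟨k, hk⟩ := Int.not_even_iff_odd.mp hp
    simp only [sig] at hk
    have hdiv : (a+b+c+d+1)/2 = k+1 := by omega
    have h2 : ¬ Even (sig (((((k+1-a,k+1-b),k+1-c),k+1-d)) : ((ℤ×ℤ)×ℤ)×ℤ)) := by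
      simp only [sig]
      rw [Int.even_iff]
      omega
    have hflip : oddFwd ((((a,b),c),d)) = (((k+1-a, k+1-b), k+1-c), k+1-d) := by
      simp only [oddFwd]
      rw [if_neg hp]
      simp only [sig]
      rw [hdiv]
    rw [if_neg hp, hflip, if_neg h2]
    simp only [gFun, sig]
    congr 1
    exact KeyO hq0 hw hx hy hz a b c d k (by omega)

end relations

end WW


/-- Product form of the second Whittaker–Watson addition formula
`2ϑ₃(w)ϑ₃(x)ϑ₃(y)ϑ₃(z) = -ϑ₁(w')ϑ₁(x')ϑ₁(y')ϑ₁(z') + ϑ₂(w')ϑ₂(x')ϑ₂(y')ϑ₂(z')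
  + ϑ₃(w')ϑ₃(x')ϑ₃(y')ϑ₃(z') + ϑ₄(w')ϑ₄(x')ϑ₄(y')ϑ₄(z')`. -/
theorem whittaker_watson_addition_second (q : ℂ) (hq0 : q ≠ 0) (hq : ‖q‖ < 1)
    (w x y z : ℂ) (hw : w ≠ 0) (hx : x ≠ 0) (hy : y ≠ 0) (hz : z ≠ 0) :
    2 * (theta (-(q * w ^ 2)) (q ^ 2) * theta (-(q * x ^ 2)) (q ^ 2)
        * theta (-(q * y ^ 2)) (q ^ 2) * theta (-(q * z ^ 2)) (q ^ 2))
      = -(q * w * x * y * z)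
            * (theta (q ^ 2 * x * y * z / w) (q ^ 2) * theta (q ^ 2 * w * y * z / x) (q ^ 2)
              * theta (q ^ 2 * w * x * z / y) (q ^ 2) * theta (q ^ 2 * w * x * y / z) (q ^ 2))
        + q * w * x * y * z
            * (theta (-(q ^ 2 * x * y * z / w)) (q ^ 2) * theta (-(q ^ 2 * w * y * z / x)) (q ^ 2)
              * theta (-(q ^ 2 * w * x * z / y)) (q ^ 2) * theta (-(q ^ 2 * w * x * y / z)) (q ^ 2))
        + theta (-(q * x * y * z / w)) (q ^ 2) * theta (-(q * w * y * z / x)) (q ^ 2)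
            * theta (-(q * w * x * z / y)) (q ^ 2) * theta (-(q * w * x * y / z)) (q ^ 2)
        + theta (q * x * y * z / w) (q ^ 2) * theta (q * w * y * z / x) (q ^ 2)
            * theta (q * w * x * z / y) (q ^ 2) * theta (q * w * x * y / z) (q ^ 2) := by
  have hq2 : ‖(q ^ 2 : ℂ)‖ < 1 := by
    rw [norm_pow]
    nlinarith [norm_nonneg q]
  have hP0 : qPoch (q ^ 2) (q ^ 2) ≠ 0 := WW.P_ne_zero hq2
  have hw2 : (w ^ 2 : ℂ) ≠ 0 := pow_ne_zero 2 hw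
  have hx2 : (x ^ 2 : ℂ) ≠ 0 := pow_ne_zero 2 hx
  have hy2 : (y ^ 2 : ℂ) ≠ 0 := pow_ne_zero 2 hy
  have hz2 : (z ^ 2 : ℂ) ≠ 0 := pow_ne_zero 2 hz
  have hU1 : x * y * z / w ≠ 0 := div_ne_zero (mul_ne_zero (mul_ne_zero hx hy) hz) hw
  have hU2 : w * y * z / x ≠ 0 := div_ne_zero (mul_ne_zero (mul_ne_zero hw hy) hz) hx
  have hU3 : w * x * z / y ≠ 0 := div_ne_zero (mul_ne_zero (mul_ne_zero hw hx) hz) hy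
  have hU4 : w * x * y / z ≠ 0 := div_ne_zero (mul_ne_zero (mul_ne_zero hw hx) hy) hz
  have hqU1 : q * (x * y * z / w) ≠ 0 := mul_ne_zero hq0 hU1
  have hqU2 : q * (w * y * z / x) ≠ 0 := mul_ne_zero hq0 hU2
  have hqU3 : q * (w * x * z / y) ≠ 0 := mul_ne_zero hq0 hU3
  have hqU4 : q * (w * x * y / z) ≠ 0 := mul_ne_zero hq0 hU4
  have mkJ : ∀ u : ℂ, u ≠ 0 → qPoch (q ^ 2) (q ^ 2) * theta (-(q * u)) (q ^ 2) = ∑' n : ℤ, q ^ (n^2) * u ^ n :=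
    fun u hu => WW.JTP hq0 hq hu
  have hL : qPoch (q ^ 2) (q ^ 2) ^ 4 * (theta (-(q * w ^ 2)) (q ^ 2) * theta (-(q * x ^ 2)) (q ^ 2) * theta (-(q * y ^ 2)) (q ^ 2) * theta (-(q * z ^ 2)) (q ^ 2)) = ∑' v : ((ℤ×ℤ)×ℤ)×ℤ, WW.gFun q (w^2) (x^2) (y^2) (z^2) v := by
    rw [show qPoch (q ^ 2) (q ^ 2) ^ 4 * (theta (-(q * w ^ 2)) (q ^ 2) * theta (-(q * x ^ 2)) (q ^ 2) * theta (-(q * y ^ 2)) (q ^ 2) * theta (-(q * z ^ 2)) (q ^ 2))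
        = (qPoch (q ^ 2) (q ^ 2) * theta (-(q * w ^ 2)) (q ^ 2)) * (qPoch (q ^ 2) (q ^ 2) * theta (-(q * x ^ 2)) (q ^ 2)) * (qPoch (q ^ 2) (q ^ 2) * theta (-(q * y ^ 2)) (q ^ 2)) * (qPoch (q ^ 2) (q ^ 2) * theta (-(q * z ^ 2)) (q ^ 2)) from by ring,
      mkJ (w ^ 2) hw2, mkJ (x ^ 2) hx2, mkJ (y ^ 2) hy2, mkJ (z ^ 2) hz2]
    exact WW.T4' hq0 hq hw2 hx2 hy2 hz2
  have hT3 : qPoch (q ^ 2) (q ^ 2) ^ 4 * (theta (-(q * x * y * z / w)) (q ^ 2) * theta (-(q * w * y * z / x)) (q ^ 2) * theta (-(q * w * x * z / y)) (q ^ 2) * theta (-(q * w * x * y / z)) (q ^ 2)) = ∑' v : ((ℤ×ℤ)×ℤ)×ℤ, WW.gFun q (x*y*z/w) (w*y*z/x) (w*x*z/y) (w*x*y/z) v := by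
    rw [show -(q * x * y * z / w) = -(q * (x*y*z/w)) from by ring,
      show -(q * w * y * z / x) = -(q * (w*y*z/x)) from by ring,
      show -(q * w * x * z / y) = -(q * (w*x*z/y)) from by ring,
      show -(q * w * x * y / z) = -(q * (w*x*y/z)) from by ring]
    rw [show qPoch (q ^ 2) (q ^ 2) ^ 4 * (theta (-(q * (x*y*z/w))) (q ^ 2) * theta (-(q * (w*y*z/x))) (q ^ 2)
          * theta (-(q * (w*x*z/y))) (q ^ 2) * theta (-(q * (w*x*y/z))) (q ^ 2))
        = (qPoch (q ^ 2) (q ^ 2) * theta (-(q * (x*y*z/w))) (q ^ 2)) * (qPoch (q ^ 2) (q ^ 2) * theta (-(q * (w*y*z/x))) (q ^ 2))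
          * (qPoch (q ^ 2) (q ^ 2) * theta (-(q * (w*x*z/y))) (q ^ 2)) * (qPoch (q ^ 2) (q ^ 2) * theta (-(q * (w*x*y/z))) (q ^ 2))
        from by ring,
      mkJ _ hU1, mkJ _ hU2, mkJ _ hU3, mkJ _ hU4]
    exact WW.T4' hq0 hq hU1 hU2 hU3 hU4
  have hT4 : qPoch (q ^ 2) (q ^ 2) ^ 4 * (theta (q * x * y * z / w) (q ^ 2) * theta (q * w * y * z / x) (q ^ 2) * theta (q * w * x * z / y) (q ^ 2) * theta (q * w * x * y / z) (q ^ 2)) = ∑' v : ((ℤ×ℤ)×ℤ)×ℤ, WW.gFun q (-(x*y*z/w)) (-(w*y*z/x)) (-(w*x*z/y)) (-(w*x*y/z)) v := by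
    rw [show q * x * y * z / w = -(q * (-(x*y*z/w))) from by ring,
      show q * w * y * z / x = -(q * (-(w*y*z/x))) from by ring,
      show q * w * x * z / y = -(q * (-(w*x*z/y))) from by ring,
      show q * w * x * y / z = -(q * (-(w*x*y/z))) from by ring]
    rw [show qPoch (q ^ 2) (q ^ 2) ^ 4 * (theta (-(q * (-(x*y*z/w)))) (q ^ 2) * theta (-(q * (-(w*y*z/x)))) (q ^ 2)
          * theta (-(q * (-(w*x*z/y)))) (q ^ 2) * theta (-(q * (-(w*x*y/z)))) (q ^ 2))
        = (qPoch (q ^ 2) (q ^ 2) * theta (-(q * (-(x*y*z/w)))) (q ^ 2)) * (qPoch (q ^ 2) (q ^ 2) * theta (-(q * (-(w*y*z/x)))) (q ^ 2))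
          * (qPoch (q ^ 2) (q ^ 2) * theta (-(q * (-(w*x*z/y)))) (q ^ 2)) * (qPoch (q ^ 2) (q ^ 2) * theta (-(q * (-(w*x*y/z)))) (q ^ 2))
        from by ring,
      mkJ _ (neg_ne_zero.mpr hU1), mkJ _ (neg_ne_zero.mpr hU2),
      mkJ _ (neg_ne_zero.mpr hU3), mkJ _ (neg_ne_zero.mpr hU4)]
    exact WW.T4' hq0 hq (neg_ne_zero.mpr hU1) (neg_ne_zero.mpr hU2)
      (neg_ne_zero.mpr hU3) (neg_ne_zero.mpr hU4)
  have hT2 : qPoch (q ^ 2) (q ^ 2) ^ 4 * (theta (-(q ^ 2 * x * y * z / w)) (q ^ 2) * theta (-(q ^ 2 * w * y * z / x)) (q ^ 2) * theta (-(q ^ 2 * w * x * z / y)) (q ^ 2) * theta (-(q ^ 2 * w * x * y / z)) (q ^ 2)) = ∑' v : ((ℤ×ℤ)×ℤ)×ℤ, WW.gFun q (q*(x*y*z/w)) (q*(w*y*z/x)) (q*(w*x*z/y)) (q*(w*x*y/z)) v := by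
    rw [show -(q ^ 2 * x * y * z / w) = -(q * (q * (x*y*z/w))) from by ring,
      show -(q ^ 2 * w * y * z / x) = -(q * (q * (w*y*z/x))) from by ring,
      show -(q ^ 2 * w * x * z / y) = -(q * (q * (w*x*z/y))) from by ring,
      show -(q ^ 2 * w * x * y / z) = -(q * (q * (w*x*y/z))) from by ring]
    rw [show qPoch (q ^ 2) (q ^ 2) ^ 4 * (theta (-(q * (q*(x*y*z/w)))) (q ^ 2) * theta (-(q * (q*(w*y*z/x)))) (q ^ 2)
          * theta (-(q * (q*(w*x*z/y)))) (q ^ 2) * theta (-(q * (q*(w*x*y/z)))) (q ^ 2))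
        = (qPoch (q ^ 2) (q ^ 2) * theta (-(q * (q*(x*y*z/w)))) (q ^ 2)) * (qPoch (q ^ 2) (q ^ 2) * theta (-(q * (q*(w*y*z/x)))) (q ^ 2))
          * (qPoch (q ^ 2) (q ^ 2) * theta (-(q * (q*(w*x*z/y)))) (q ^ 2)) * (qPoch (q ^ 2) (q ^ 2) * theta (-(q * (q*(w*x*y/z)))) (q ^ 2))
        from by ring,
      mkJ _ hqU1, mkJ _ hqU2, mkJ _ hqU3, mkJ _ hqU4]
    exact WW.T4' hq0 hq hqU1 hqU2 hqU3 hqU4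
  have hT1 : qPoch (q ^ 2) (q ^ 2) ^ 4 * (theta (q ^ 2 * x * y * z / w) (q ^ 2) * theta (q ^ 2 * w * y * z / x) (q ^ 2) * theta (q ^ 2 * w * x * z / y) (q ^ 2) * theta (q ^ 2 * w * x * y / z) (q ^ 2)) = ∑' v : ((ℤ×ℤ)×ℤ)×ℤ, WW.gFun q (-(q*(x*y*z/w))) (-(q*(w*y*z/x))) (-(q*(w*x*z/y))) (-(q*(w*x*y/z))) v := by
    rw [show q ^ 2 * x * y * z / w = -(q * (-(q * (x*y*z/w)))) from by ring,
      show q ^ 2 * w * y * z / x = -(q * (-(q * (w*y*z/x)))) from by ring,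
      show q ^ 2 * w * x * z / y = -(q * (-(q * (w*x*z/y)))) from by ring,
      show q ^ 2 * w * x * y / z = -(q * (-(q * (w*x*y/z)))) from by ring]
    rw [show qPoch (q ^ 2) (q ^ 2) ^ 4 * (theta (-(q * (-(q*(x*y*z/w))))) (q ^ 2) * theta (-(q * (-(q*(w*y*z/x))))) (q ^ 2)
          * theta (-(q * (-(q*(w*x*z/y))))) (q ^ 2) * theta (-(q * (-(q*(w*x*y/z))))) (q ^ 2))
        = (qPoch (q ^ 2) (q ^ 2) * theta (-(q * (-(q*(x*y*z/w))))) (q ^ 2)) * (qPoch (q ^ 2) (q ^ 2) * theta (-(q * (-(q*(w*y*z/x))))) (q ^ 2))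
          * (qPoch (q ^ 2) (q ^ 2) * theta (-(q * (-(q*(w*x*z/y))))) (q ^ 2)) * (qPoch (q ^ 2) (q ^ 2) * theta (-(q * (-(q*(w*x*y/z))))) (q ^ 2))
        from by ring,
      mkJ _ (neg_ne_zero.mpr hqU1), mkJ _ (neg_ne_zero.mpr hqU2),
      mkJ _ (neg_ne_zero.mpr hqU3), mkJ _ (neg_ne_zero.mpr hqU4)]
    exact WW.T4' hq0 hq (neg_ne_zero.mpr hqU1) (neg_ne_zero.mpr hqU2)
      (neg_ne_zero.mpr hqU3) (neg_ne_zero.mpr hqU4)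
  -- summabilities
  have Sg3 : Summable (WW.gFun q (x*y*z/w) (w*y*z/x) (w*x*z/y) (w*x*y/z)) :=
    (WW.T4s hq0 hq hU1 hU2 hU3 hU4).of_norm
  have Sg4 : Summable (WW.gFun q (-(x*y*z/w)) (-(w*y*z/x)) (-(w*x*z/y)) (-(w*x*y/z))) :=
    (WW.T4s hq0 hq (neg_ne_zero.mpr hU1) (neg_ne_zero.mpr hU2)
      (neg_ne_zero.mpr hU3) (neg_ne_zero.mpr hU4)).of_norm
  have Sg2 : Summable (WW.gFun q (q*(x*y*z/w)) (q*(w*y*z/x)) (q*(w*x*z/y)) (q*(w*x*y/z))) :=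
    (WW.T4s hq0 hq hqU1 hqU2 hqU3 hqU4).of_norm
  have Sg1 : Summable (WW.gFun q (-(q*(x*y*z/w))) (-(q*(w*y*z/x))) (-(q*(w*x*z/y))) (-(q*(w*x*y/z)))) :=
    (WW.T4s hq0 hq (neg_ne_zero.mpr hqU1) (neg_ne_zero.mpr hqU2)
      (neg_ne_zero.mpr hqU3) (neg_ne_zero.mpr hqU4)).of_norm
  have SnW := WW.T4s hq0 hq hw2 hx2 hy2 hz2
  -- even part
  have e34 : (∑' v : ((ℤ×ℤ)×ℤ)×ℤ, WW.gFun q (x*y*z/w) (w*y*z/x) (w*x*z/y) (w*x*y/z) v) + (∑' v : ((ℤ×ℤ)×ℤ)×ℤ, WW.gFun q (-(x*y*z/w)) (-(w*y*z/x)) (-(w*x*z/y)) (-(w*x*y/z)) v)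
      = ∑' v : ((ℤ×ℤ)×ℤ)×ℤ, (if Even (WW.sig v) then 2 * WW.gFun q (x*y*z/w) (w*y*z/x) (w*x*z/y) (w*x*y/z) v else 0) := by
    rw [← Summable.tsum_add Sg3 Sg4]
    apply tsum_congr
    intro v
    rw [WW.g4_eq hq0 hw hx hy hz v]
    by_cases hp : Even (WW.sig v)
    · rw [if_pos hp, Even.neg_one_zpow hp]
      ring
    · rw [if_neg hp, Odd.neg_one_zpow (Int.not_even_iff_odd.mp hp)]
      ring
  -- odd part
  have e12 : -(q * w * x * y * z) * (∑' v : ((ℤ×ℤ)×ℤ)×ℤ, WW.gFun q (-(q*(x*y*z/w))) (-(q*(w*y*z/x))) (-(q*(w*x*z/y))) (-(q*(w*x*y/z))) v)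
        + q * w * x * y * z * (∑' v : ((ℤ×ℤ)×ℤ)×ℤ, WW.gFun q (q*(x*y*z/w)) (q*(w*y*z/x)) (q*(w*x*z/y)) (q*(w*x*y/z)) v)
      = ∑' v : ((ℤ×ℤ)×ℤ)×ℤ, (if Even (WW.sig v) then 0
          else 2 * ((q*w*x*y*z) * (q ^ (WW.sig v) * WW.gFun q (x*y*z/w) (w*y*z/x) (w*x*z/y) (w*x*y/z) v))) := by
    rw [← tsum_mul_left, ← tsum_mul_left,
      ← Summable.tsum_add (Sg1.mul_left (-(q * w * x * y * z))) (Sg2.mul_left (q * w * x * y * z))]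
    apply tsum_congr
    intro v
    rw [WW.g1_eq hq0 hw hx hy hz v, WW.g2_eq hq0 hw hx hy hz v]
    by_cases hp : Even (WW.sig v)
    · rw [if_pos hp, Even.neg_one_zpow hp]
      ring
    · rw [if_neg hp, Odd.neg_one_zpow (Int.not_even_iff_odd.mp hp)]
      ring
  -- reindexing
  have eE : (∑' v : ((ℤ×ℤ)×ℤ)×ℤ, (if Even (WW.sig v) then 2 * WW.gFun q (x*y*z/w) (w*y*z/x) (w*x*z/y) (w*x*y/z) v else 0))
      = ∑' v : ((ℤ×ℤ)×ℤ)×ℤ, (if Even (WW.sig v) then 2 * WW.gFun q (w^2) (x^2) (y^2) (z^2) v else 0) := by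
    rw [← Equiv.tsum_eq WW.evenPerm
      (fun v => if Even (WW.sig v) then 2 * WW.gFun q (w^2) (x^2) (y^2) (z^2) v else 0)]
    apply tsum_congr
    intro v
    exact WW.even_reindex hq0 hw hx hy hz v
  have eO : (∑' v : ((ℤ×ℤ)×ℤ)×ℤ, (if Even (WW.sig v) then 0
        else 2 * ((q*w*x*y*z) * (q ^ (WW.sig v) * WW.gFun q (x*y*z/w) (w*y*z/x) (w*x*z/y) (w*x*y/z) v))))
      = ∑' v : ((ℤ×ℤ)×ℤ)×ℤ, (if Even (WW.sig v) then 0 else 2 * WW.gFun q (w^2) (x^2) (y^2) (z^2) v) := by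
    rw [← Equiv.tsum_eq WW.oddPerm
      (fun v => if Even (WW.sig v) then 0 else 2 * WW.gFun q (w^2) (x^2) (y^2) (z^2) v)]
    apply tsum_congr
    intro v
    exact WW.odd_reindex hq0 hw hx hy hz v
  -- final combination
  have SFE : Summable (fun v : ((ℤ×ℤ)×ℤ)×ℤ => if Even (WW.sig v) then 2 * WW.gFun q (w^2) (x^2) (y^2) (z^2) v else 0) := by
    apply Summable.of_norm_bounded (g := fun v => 2 * ‖WW.gFun q (w^2) (x^2) (y^2) (z^2) v‖) (SnW.mul_left 2)
    intro v
    by_cases hp : Even (WW.sig v)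
    · rw [if_pos hp, norm_mul]
      gcongr
      norm_num
    · rw [if_neg hp, norm_zero]
      positivity
  have SFO : Summable (fun v : ((ℤ×ℤ)×ℤ)×ℤ => if Even (WW.sig v) then 0 else 2 * WW.gFun q (w^2) (x^2) (y^2) (z^2) v) := by
    apply Summable.of_norm_bounded (g := fun v => 2 * ‖WW.gFun q (w^2) (x^2) (y^2) (z^2) v‖) (SnW.mul_left 2)
    intro v
    by_cases hp : Even (WW.sig v)
    · rw [if_pos hp, norm_zero]
      positivity
    · rw [if_neg hp, norm_mul]
      gcongr
      norm_num
  have efin : (∑' v : ((ℤ×ℤ)×ℤ)×ℤ, (if Even (WW.sig v) then 2 * WW.gFun q (w^2) (x^2) (y^2) (z^2) v else 0))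
        + (∑' v : ((ℤ×ℤ)×ℤ)×ℤ, (if Even (WW.sig v) then 0 else 2 * WW.gFun q (w^2) (x^2) (y^2) (z^2) v))
      = 2 * ∑' v : ((ℤ×ℤ)×ℤ)×ℤ, WW.gFun q (w^2) (x^2) (y^2) (z^2) v := by
    rw [← Summable.tsum_add SFE SFO, ← tsum_mul_left]
    apply tsum_congr
    intro v
    by_cases hp : Even (WW.sig v)
    · rw [if_pos hp, if_pos hp]
      ring
    · rw [if_neg hp, if_neg hp]
      ring
  -- assemble
  refine mul_left_cancel₀ (pow_ne_zero 4 hP0) ?_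
  rw [show qPoch (q ^ 2) (q ^ 2) ^ 4 * (2 * (theta (-(q * w ^ 2)) (q ^ 2) * theta (-(q * x ^ 2)) (q ^ 2) * theta (-(q * y ^ 2)) (q ^ 2) * theta (-(q * z ^ 2)) (q ^ 2))) = 2 * (qPoch (q ^ 2) (q ^ 2) ^ 4 * (theta (-(q * w ^ 2)) (q ^ 2) * theta (-(q * x ^ 2)) (q ^ 2) * theta (-(q * y ^ 2)) (q ^ 2) * theta (-(q * z ^ 2)) (q ^ 2))) from by ring, hL]
  rw [show qPoch (q ^ 2) (q ^ 2) ^ 4 * (-(q * w * x * y * z) * (theta (q ^ 2 * x * y * z / w) (q ^ 2) * theta (q ^ 2 * w * y * z / x) (q ^ 2) * theta (q ^ 2 * w * x * z / y) (q ^ 2) * theta (q ^ 2 * w * x * y / z) (q ^ 2)) + q * w * x * y * z * (theta (-(q ^ 2 * x * y * z / w)) (q ^ 2) * theta (-(q ^ 2 * w * y * z / x)) (q ^ 2) * theta (-(q ^ 2 * w * x * z / y)) (q ^ 2) * theta (-(q ^ 2 * w * x * y / z)) (q ^ 2))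
        + theta (-(q * x * y * z / w)) (q ^ 2) * theta (-(q * w * y * z / x)) (q ^ 2) * theta (-(q * w * x * z / y)) (q ^ 2) * theta (-(q * w * x * y / z)) (q ^ 2) + theta (q * x * y * z / w) (q ^ 2) * theta (q * w * y * z / x) (q ^ 2) * theta (q * w * x * z / y) (q ^ 2) * theta (q * w * x * y / z) (q ^ 2))
      = -(q * w * x * y * z) * (qPoch (q ^ 2) (q ^ 2) ^ 4 * (theta (q ^ 2 * x * y * z / w) (q ^ 2) * theta (q ^ 2 * w * y * z / x) (q ^ 2) * theta (q ^ 2 * w * x * z / y) (q ^ 2) * theta (q ^ 2 * w * x * y / z) (q ^ 2))) + q * w * x * y * z * (qPoch (q ^ 2) (q ^ 2) ^ 4 * (theta (-(q ^ 2 * x * y * z / w)) (q ^ 2) * theta (-(q ^ 2 * w * y * z / x)) (q ^ 2) * theta (-(q ^ 2 * w * x * z / y)) (q ^ 2) * theta (-(q ^ 2 * w * x * y / z)) (q ^ 2)))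
        + qPoch (q ^ 2) (q ^ 2) ^ 4 * (theta (-(q * x * y * z / w)) (q ^ 2) * theta (-(q * w * y * z / x)) (q ^ 2) * theta (-(q * w * x * z / y)) (q ^ 2) * theta (-(q * w * x * y / z)) (q ^ 2)) + qPoch (q ^ 2) (q ^ 2) ^ 4 * (theta (q * x * y * z / w) (q ^ 2) * theta (q * w * y * z / x) (q ^ 2) * theta (q * w * x * z / y) (q ^ 2) * theta (q * w * x * y / z) (q ^ 2)) from by ring,
    hT1, hT2, hT3, hT4, e12, add_assoc, e34, eE, eO, ← efin]
  exact add_comm _ _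
end
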